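/- arXiv:1405.4270 — 6 statements merged into one kernel-verified Lean document; each statement's English description precedes it below -/
import Mathlib

section
/- For every real α > 0, the function u(t) = t^α / (e^{t^α} − 1), defined for t > 0, is decreasing on (0, ∞); moreover, if 0 < α ≤ 1, then u is convex on (0, ∞). -/
open Real Set

lemma aux1 {x : ℝ} (hx : 0 ≤ x) : 0 ≤ (x - 1) * Real.exp x + 1 := by
  have h : MonotoneOn (fun x : ℝ => (x - 1) * Real.exp x + 1) (Ici 0) := by
    apply monotoneOn_of_hasDerivWithinAt_nonneg (f' := fun x => x * Real.exp x) (convex_Ici 0)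
    · fun_prop
    · intro y hy
      have : HasDerivAt (fun x : ℝ => (x - 1) * Real.exp x + 1)
          ((1) * Real.exp y + (y - 1) * Real.exp y) y :=
        (((hasDerivAt_id y).sub_const 1).mul (Real.hasDerivAt_exp y)).add_const 1
      have := this.hasDerivWithinAt (s := interior (Ici (0:ℝ)))
      exact this.congr_deriv (by ring)
    · intro y hy
      rw [interior_Ici] at hy
      exact mul_nonneg (le_of_lt hy) (Real.exp_pos y).le
  have := h (self_mem_Ici) hx hx
  simpa using this

lemma aux2 {x : ℝ} (hx : 0 ≤ x) : 0 ≤ (x - 2) * Real.exp x + x + 2 := by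
  have h : MonotoneOn (fun x : ℝ => (x - 2) * Real.exp x + x + 2) (Ici 0) := by
    apply monotoneOn_of_hasDerivWithinAt_nonneg
      (f' := fun x => (x - 1) * Real.exp x + 1) (convex_Ici 0)
    · fun_prop
    · intro y hy
      have : HasDerivAt (fun x : ℝ => (x - 2) * Real.exp x + x + 2)
          ((1) * Real.exp y + (y - 2) * Real.exp y + 1) y :=
        ((((((hasDerivAt_id y).sub_const 2).mul (Real.hasDerivAt_exp y))).add
          (hasDerivAt_id y)).add_const 2)
      have := this.hasDerivWithinAt (s := interior (Ici (0:ℝ)))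
      exact this.congr_deriv (by ring)
    · intro y hy
      rw [interior_Ici] at hy
      exact aux1 hy.le
  have := h (self_mem_Ici) hx hx
  simpa using this

lemma exp_sub_one_pos {x : ℝ} (hx : 0 < x) : 0 < Real.exp x - 1 := by
  have := Real.add_one_le_exp x
  nlinarith [Real.add_one_le_exp x, hx]

/-- first derivative of `g x = x / (exp x - 1)` -/
lemma g_hasDerivAt {x : ℝ} (hx : 0 < x) :
    HasDerivAt (fun x : ℝ => x / (Real.exp x - 1))
      ((1 * (Real.exp x - 1) - x * Real.exp x) / (Real.exp x - 1) ^ 2) x := by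
  have hD : Real.exp x - 1 ≠ 0 := (exp_sub_one_pos hx).ne'
  have h1 : HasDerivAt (fun x : ℝ => Real.exp x - 1) (Real.exp x) x :=
    (Real.hasDerivAt_exp x).sub_const 1
  exact (hasDerivAt_id x).div h1 hD

/-- second derivative setup: derivative of the first-derivative formula -/
lemma g'_hasDerivAt {x : ℝ} (hx : 0 < x) :
    HasDerivAt (fun x : ℝ => (1 * (Real.exp x - 1) - x * Real.exp x) / (Real.exp x - 1) ^ 2)
      ((((Real.exp x - (1 * Real.exp x + x * Real.exp x))) * (Real.exp x - 1) ^ 2 -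
          (1 * (Real.exp x - 1) - x * Real.exp x) *
            (2 * (Real.exp x - 1) ^ 1 * Real.exp x)) / ((Real.exp x - 1) ^ 2) ^ 2) x := by
  have hD : Real.exp x - 1 ≠ 0 := (exp_sub_one_pos hx).ne'
  have hE : HasDerivAt (fun x : ℝ => Real.exp x - 1) (Real.exp x) x :=
    (Real.hasDerivAt_exp x).sub_const 1
  have hN : HasDerivAt (fun x : ℝ => 1 * (Real.exp x - 1) - x * Real.exp x)
      ((Real.exp x - (1 * Real.exp x + x * Real.exp x))) x := by
    have h1 : HasDerivAt (fun x : ℝ => (1:ℝ) * (Real.exp x - 1)) (Real.exp x) x := by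
      simpa using hE.const_mul 1
    have h2 : HasDerivAt (fun x : ℝ => x * Real.exp x)
        (1 * Real.exp x + x * Real.exp x) x :=
      (hasDerivAt_id x).mul (Real.hasDerivAt_exp x)
    exact h1.sub h2
  have hD2 : HasDerivAt (fun x : ℝ => (Real.exp x - 1) ^ 2)
      (2 * (Real.exp x - 1) ^ 1 * Real.exp x) x := by
    exact (hE.pow 2).congr_deriv (by norm_num)
  exact hN.div hD2 (pow_ne_zero 2 hD)

lemma g_antitone : AntitoneOn (fun x : ℝ => x / (Real.exp x - 1)) (Ioi 0) := by
  apply antitoneOn_of_hasDerivWithinAt_nonpos (convex_Ioi 0)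
    (f' := fun x => (1 * (Real.exp x - 1) - x * Real.exp x) / (Real.exp x - 1) ^ 2)
  · intro y hy
    exact ((g_hasDerivAt hy).continuousAt).continuousWithinAt
  · intro y hy
    rw [interior_Ioi] at hy
    exact (g_hasDerivAt hy).hasDerivWithinAt
  · intro y hy
    rw [interior_Ioi] at hy
    apply div_nonpos_of_nonpos_of_nonneg
    · have := aux1 hy.le
      nlinarith
    · positivity

lemma g_convex : ConvexOn ℝ (Ioi 0) (fun x : ℝ => x / (Real.exp x - 1)) := by
  apply convexOn_of_hasDerivWithinAt2_nonneg (convex_Ioi 0)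
    (f' := fun x => (1 * (Real.exp x - 1) - x * Real.exp x) / (Real.exp x - 1) ^ 2)
    (f'' := fun x => (((Real.exp x - (1 * Real.exp x + x * Real.exp x))) * (Real.exp x - 1) ^ 2 -
          (1 * (Real.exp x - 1) - x * Real.exp x) *
            (2 * (Real.exp x - 1) ^ 1 * Real.exp x)) / ((Real.exp x - 1) ^ 2) ^ 2)
  · intro y hy
    exact ((g_hasDerivAt hy).continuousAt).continuousWithinAt
  · intro y hy
    rw [interior_Ioi] at hy
    exact (g_hasDerivAt hy).hasDerivWithinAt
  · intro y hy
    rw [interior_Ioi] at hy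
    exact (g'_hasDerivAt hy).hasDerivWithinAt
  · intro y hy
    rw [interior_Ioi] at hy
    apply div_nonneg
    · have h1 := aux2 hy.le
      have h2 := (exp_sub_one_pos hy).le
      have h3 := (Real.exp_pos y).le
      have key : (Real.exp y - (1 * Real.exp y + y * Real.exp y)) * (Real.exp y - 1) ^ 2 -
          (1 * (Real.exp y - 1) - y * Real.exp y) * (2 * (Real.exp y - 1) ^ 1 * Real.exp y)
          = (Real.exp y - 1) * Real.exp y * ((y - 2) * Real.exp y + y + 2) := by ring
      rw [key]
      positivity
    · positivity

/-- For every real `α > 0`, the function `u(t) = t^α / (e^{t^α} − 1)` is decreasing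
on `(0, ∞)`; moreover, if `0 < α ≤ 1`, then `u` is convex on `(0, ∞)`. -/
theorem weibull_u_antitone_and_convex (α : ℝ) (hα : 0 < α) :
    AntitoneOn (fun t : ℝ => t ^ α / (exp (t ^ α) - 1)) (Ioi (0 : ℝ)) ∧
    (α ≤ 1 → ConvexOn ℝ (Ioi (0 : ℝ)) (fun t : ℝ => t ^ α / (exp (t ^ α) - 1))) := by
  have himg : (fun t : ℝ => t ^ α) '' Ioi 0 = Ioi 0 := by
    apply Subset.antisymm
    · rintro _ ⟨t, ht, rfl⟩
      exact Real.rpow_pos_of_pos ht α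
    · intro y hy
      exact ⟨y ^ α⁻¹, Real.rpow_pos_of_pos hy _,
        Real.rpow_inv_rpow (le_of_lt hy) hα.ne'⟩
  constructor
  · intro s hs t ht hst
    have h1 : s ^ α ≤ t ^ α := Real.rpow_le_rpow (le_of_lt hs) hst hα.le
    exact g_antitone (Real.rpow_pos_of_pos hs α) (Real.rpow_pos_of_pos ht α) h1
  · intro h1
    have hconc : ConcaveOn ℝ (Ioi 0) (fun t : ℝ => t ^ α) :=
      (Real.concaveOn_rpow hα.le h1).subset Ioi_subset_Ici_self (convex_Ioi 0)
    have := ConvexOn.comp_concaveOn (f := fun t : ℝ => t ^ α)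
      (g := fun x : ℝ => x / (Real.exp x - 1)) (by rw [himg]; exact g_convex) hconc
      (by rw [himg]; exact g_antitone)
    exact this
end

section
/- The function ψ₃(t) = t e^t (1 + t − e^t) / (e^t − 1)^3, defined for t > 0, is increasing on (0, ∞). -/
open Real Set

/-- Generic derivative for `(quadratic)·e^{2t} + (quadratic)·e^t + quadratic`. -/
private lemma gderiv (a b c d e f g h i : ℝ) (t : ℝ) :
    HasDerivAt (fun t : ℝ =>
        (a+b*t+c*t^2)*(exp t)^2 + (d+e*t+f*t^2)*exp t + (g+h*t+i*t^2))
      ((2*a+b+(2*b+2*c)*t+2*c*t^2)*(exp t)^2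
        + (d+e+(e+2*f)*t+f*t^2)*exp t + (h+2*i*t)) t := by
  have hq : ∀ a b c : ℝ, HasDerivAt (fun t : ℝ => a+b*t+c*t^2) (b+2*c*t) t := by
    intro a b c
    have h1 : HasDerivAt (fun t : ℝ => a + b*t) (b) t := by
      simpa using ((hasDerivAt_id t).const_mul b).const_add a
    have h2 : HasDerivAt (fun t : ℝ => c*t^2) (c*(2*t)) t := by
      simpa using (hasDerivAt_pow 2 t).const_mul c
    have := h1.add h2
    exact this.congr_deriv (by ring)
  have he : HasDerivAt (fun t : ℝ => exp t) (exp t) t := Real.hasDerivAt_exp t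
  have he2 : HasDerivAt (fun t : ℝ => (exp t)^2) (2*(exp t)^2) t := by
    have := he.pow 2
    exact this.congr_deriv (by ring)
  have h1 := (hq a b c).mul he2
  have h2 := (hq d e f).mul he
  have := (h1.add h2).add (hq g h i)
  exact this.congr_deriv (by ring)

private lemma aux_nonneg (f f' : ℝ → ℝ) (hd : ∀ t, HasDerivAt f (f' t) t)
    (h0 : f 0 = 0) (hp : ∀ t, 0 ≤ t → 0 ≤ f' t) :
    ∀ t, 0 ≤ t → 0 ≤ f t := by
  intro t ht
  have hm : MonotoneOn f (Ici 0) := by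
    apply monotoneOn_of_deriv_nonneg (convex_Ici 0)
    · exact fun x _ => (hd x).continuousAt.continuousWithinAt
    · exact fun x _ => (hd x).differentiableAt.differentiableWithinAt
    · intro x hx
      rw [(hd x).deriv]
      exact hp x (le_of_lt (by simpa using hx))
  calc (0:ℝ) = f 0 := h0.symm
    _ ≤ f t := hm self_mem_Ici ht ht

/-- Key inequality: `(t−1)e^{2t} + 2(1+t−t²)e^t − (t²+3t+1) ≥ 0` for `t ≥ 0`. -/
private lemma key (t : ℝ) (ht : 0 ≤ t) :
    0 ≤ ((-1)+1*t+0*t^2)*(exp t)^2 + (2+2*t+(-2)*t^2)*exp t + ((-1)+(-3)*t+(-1)*t^2) := by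
  -- chain of derivatives
  have hg4 : ∀ t : ℝ, 0 ≤ t →
      0 ≤ ((16)+16*t+0*t^2)*(exp t)^2 + ((-14)+(-14)*t+(-2)*t^2)*exp t + (0+0*t+0*t^2) := by
    intro t ht
    have h1 : t + 1 ≤ exp t := Real.add_one_le_exp t
    have h2 : (0:ℝ) < exp t := exp_pos t
    nlinarith [sq_nonneg t, mul_pos h2 h2, sq_nonneg (exp t - 1 - t)]
  have hg3 : ∀ t : ℝ, 0 ≤ t →
      0 ≤ (4+8*t+0*t^2)*(exp t)^2 + ((-4)+(-10)*t+(-2)*t^2)*exp t + (0+0*t+0*t^2) := by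
    apply aux_nonneg _ _ (fun t => gderiv 4 8 0 (-4) (-10) (-2) 0 0 0 t)
    · norm_num
    · intro t ht
      have := hg4 t ht
      convert this using 2 <;> ring
  have hg2 : ∀ t : ℝ, 0 ≤ t →
      0 ≤ (0+4*t+0*t^2)*(exp t)^2 + (2+(-6)*t+(-2)*t^2)*exp t + ((-2)+0*t+0*t^2) := by
    apply aux_nonneg _ _ (fun t => gderiv 0 4 0 2 (-6) (-2) (-2) 0 0 t)
    · norm_num
    · intro t ht
      have := hg3 t ht
      convert this using 2 <;> ring
  have hg1 : ∀ t : ℝ, 0 ≤ t →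
      0 ≤ ((-1)+2*t+0*t^2)*(exp t)^2 + (4+(-2)*t+(-2)*t^2)*exp t + ((-3)+(-2)*t+0*t^2) := by
    apply aux_nonneg _ _ (fun t => gderiv (-1) 2 0 4 (-2) (-2) (-3) (-2) 0 t)
    · norm_num
    · intro t ht
      have := hg2 t ht
      convert this using 2 <;> ring
  have hg0 : ∀ t : ℝ, 0 ≤ t →
      0 ≤ ((-1)+1*t+0*t^2)*(exp t)^2 + (2+2*t+(-2)*t^2)*exp t + ((-1)+(-3)*t+(-1)*t^2) := by
    apply aux_nonneg _ _ (fun t => gderiv (-1) 1 0 2 2 (-2) (-1) (-3) (-1) t)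
    · norm_num
    · intro t ht
      have := hg1 t ht
      convert this using 2 <;> ring
  exact hg0 t ht

/-- The function `ψ₃(t) = t e^t (1 + t − e^t) / (e^t − 1)^3` is increasing on `(0, ∞)`. -/
theorem psi3_monotone :
    MonotoneOn (fun t : ℝ => t * exp t * (1 + t - exp t) / (exp t - 1) ^ 3)
      (Ioi (0 : ℝ)) := by
  have hderiv : ∀ x : ℝ, 0 < x → HasDerivAt
      (fun t : ℝ => t * exp t * (1 + t - exp t) / (exp t - 1) ^ 3)
      ((exp x) * (exp x - 1)^2 *
        (((-1)+1*x+0*x^2)*(exp x)^2 + (2+2*x+(-2)*x^2)*exp x + ((-1)+(-3)*x+(-1)*x^2))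
        / ((exp x - 1)^3)^2) x := by
    intro x hx
    have hu : 1 < exp x := by
      have := Real.add_one_le_exp x
      nlinarith [Real.add_one_lt_exp (ne_of_gt hx)]
    have hne : (exp x - 1) ^ 3 ≠ 0 := pow_ne_zero 3 (by linarith)
    have hN : HasDerivAt (fun t : ℝ => t * exp t * (1 + t - exp t))
        ((exp x + x * exp x) * (1 + x - exp x) + x * exp x * (1 - exp x)) x := by
      have h1 : HasDerivAt (fun t : ℝ => t * exp t) (exp x + x * exp x) x := by
        have := (hasDerivAt_id x).mul (Real.hasDerivAt_exp x)
        simp only [id_eq, one_mul] at this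
        exact this
      have h2 : HasDerivAt (fun t : ℝ => 1 + t - exp t) (1 - exp x) x := by
        have := (((hasDerivAt_id x).const_add 1).sub (Real.hasDerivAt_exp x))
        exact this
      exact h1.mul h2
    have hD : HasDerivAt (fun t : ℝ => (exp t - 1) ^ 3)
        (3 * (exp x - 1)^2 * exp x) x := by
      have := ((Real.hasDerivAt_exp x).sub_const 1).pow 3
      exact this.congr_deriv (by norm_num)
    have := hN.div hD hne
    refine this.congr_deriv ?_
    field_simp
    ring
  apply monotoneOn_of_deriv_nonneg (convex_Ioi 0)
  · exact fun x hx => ((hderiv x hx).continuousAt).continuousWithinAt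
  · intro x hx
    rw [interior_Ioi] at hx
    exact (hderiv x hx).differentiableAt.differentiableWithinAt
  · intro x hx
    rw [interior_Ioi] at hx
    rw [(hderiv x hx).deriv]
    have hg := key x (le_of_lt hx)
    have h1 : (0:ℝ) < exp x := exp_pos x
    apply div_nonneg
    · positivity
    · positivity
end

section
/- For every real α with 0 < α ≤ 1, the function w(t) = α t^{2α−1} e^{t^α} (1 + t^α − e^{t^α}) / (e^{t^α} − 1)^3, defined for t > 0, is increasing on (0, ∞). -/
open Real Set

private lemma nonneg_on_Ici (f f' : ℝ → ℝ)
    (hd : ∀ x, HasDerivAt f (f' x) x) (h0 : f 0 = 0)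
    (hf' : ∀ x, 0 ≤ x → 0 ≤ f' x) {x : ℝ} (hx : 0 ≤ x) : 0 ≤ f x := by
  have hm : MonotoneOn f (Ici (0:ℝ)) := by
    apply monotoneOn_of_deriv_nonneg (convex_Ici 0)
      (fun y _ => (hd y).continuousAt.continuousWithinAt)
    · intro y _
      exact (hd y).differentiableAt.differentiableWithinAt
    · intro y hy
      rw [interior_Ici] at hy
      rw [(hd y).deriv]
      exact hf' y hy.le
  calc (0:ℝ) = f 0 := h0.symm
    _ ≤ f x := hm self_mem_Ici hx hx

private lemma hQ4 (x : ℝ) (hx : 0 ≤ x) :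
    0 ≤ (16+16*x) * exp x ^ 2 + (-14-14*x-2*x^2) * exp x := by
  have h1 : x + 1 ≤ exp x := Real.add_one_le_exp x
  have h2 : (16+16*x) * exp x * (x+1) ≤ (16+16*x) * exp x * exp x :=
    mul_le_mul_of_nonneg_left h1 (by positivity)
  have h3 : 0 ≤ (14*x^2+18*x+2) * exp x := by positivity
  nlinarith [h2, h3]

private lemma hQ3 (x : ℝ) (hx : 0 ≤ x) :
    0 ≤ (4+8*x) * exp x ^ 2 + (-4-10*x-2*x^2) * exp x := by
  apply nonneg_on_Ici _ (fun y => (16+16*y) * exp y ^ 2 + (-14-14*y-2*y^2) * exp y)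
    ?_ (by norm_num) hQ4 hx
  intro y
  have hE := Real.hasDerivAt_exp y
  have h := (((hasDerivAt_const y 4).add ((hasDerivAt_id y).const_mul 8)).mul (hE.pow 2)).add
    (((((hasDerivAt_const y (-4)).sub ((hasDerivAt_id y).const_mul 10)).sub
      ((hasDerivAt_pow 2 y).const_mul 2))).mul hE)
  exact h.congr_deriv (by simp only [id_eq, Pi.add_apply, Pi.sub_apply, Pi.mul_apply, Pi.pow_apply]; push_cast; ring)

private lemma hQ2 (x : ℝ) (hx : 0 ≤ x) :
    0 ≤ 4*x * exp x ^ 2 + (2-6*x-2*x^2) * exp x + (-2) := by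
  apply nonneg_on_Ici _ (fun y => (4+8*y) * exp y ^ 2 + (-4-10*y-2*y^2) * exp y)
    ?_ (by norm_num) hQ3 hx
  intro y
  have hE := Real.hasDerivAt_exp y
  have h := ((((hasDerivAt_id y).const_mul 4).mul (hE.pow 2)).add
    ((((hasDerivAt_const y 2).sub ((hasDerivAt_id y).const_mul 6)).sub
      ((hasDerivAt_pow 2 y).const_mul 2)).mul hE)).add_const (-2)
  exact h.congr_deriv (by simp only [id_eq, Pi.add_apply, Pi.sub_apply, Pi.mul_apply, Pi.pow_apply]; push_cast; ring)

private lemma hQ1 (x : ℝ) (hx : 0 ≤ x) :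
    0 ≤ (2*x-1) * exp x ^ 2 + (4-2*x-2*x^2) * exp x + (-3-2*x) := by
  apply nonneg_on_Ici _ (fun y => 4*y * exp y ^ 2 + (2-6*y-2*y^2) * exp y + (-2))
    ?_ (by norm_num) hQ2 hx
  intro y
  have hE := Real.hasDerivAt_exp y
  have h := (((((hasDerivAt_id y).const_mul 2).sub_const 1).mul (hE.pow 2)).add
    ((((hasDerivAt_const y 4).sub ((hasDerivAt_id y).const_mul 2)).sub
      ((hasDerivAt_pow 2 y).const_mul 2)).mul hE)).add
    ((hasDerivAt_const y (-3)).sub ((hasDerivAt_id y).const_mul 2))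
  exact h.congr_deriv (by simp only [id_eq, Pi.add_apply, Pi.sub_apply, Pi.mul_apply, Pi.pow_apply]; push_cast; ring)

private lemma hQ0 (x : ℝ) (hx : 0 ≤ x) :
    0 ≤ (x-1) * exp x ^ 2 + (2+2*x-2*x^2) * exp x + (-1-3*x-x^2) := by
  apply nonneg_on_Ici _ (fun y => (2*y-1) * exp y ^ 2 + (4-2*y-2*y^2) * exp y + (-3-2*y))
    ?_ (by norm_num) hQ1 hx
  intro y
  have hE := Real.hasDerivAt_exp y
  have h := ((((hasDerivAt_id y).sub_const 1).mul (hE.pow 2)).add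
    ((((hasDerivAt_const y 2).add ((hasDerivAt_id y).const_mul 2)).sub
      ((hasDerivAt_pow 2 y).const_mul 2)).mul hE)).add
    (((hasDerivAt_const y (-1)).sub ((hasDerivAt_id y).const_mul 3)).sub (hasDerivAt_pow 2 y))
  exact h.congr_deriv (by simp only [id_eq, Pi.add_apply, Pi.sub_apply, Pi.mul_apply, Pi.pow_apply]; push_cast; ring)

private lemma F_hasDerivAt {x : ℝ} (hx : 0 < x) :
    HasDerivAt (fun y : ℝ => y * exp y * (1 + y - exp y) / (exp y - 1) ^ 3)
      (((exp x * (1+3*x+x^2) - exp x ^ 2 * (1+2*x)) * (exp x - 1)^3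
        - x * exp x * (1 + x - exp x) * (3 * (exp x - 1)^2 * exp x)) / ((exp x - 1)^3)^2) x := by
  have hE := Real.hasDerivAt_exp x
  have hN : HasDerivAt (fun y : ℝ => y * exp y * (1 + y - exp y))
      (exp x * (1+3*x+x^2) - exp x ^ 2 * (1+2*x)) x := by
    have h := (((hasDerivAt_id x).mul hE).mul
      (((hasDerivAt_const x 1).add (hasDerivAt_id x)).sub hE))
    exact h.congr_deriv (by simp only [id_eq, Pi.add_apply, Pi.sub_apply, Pi.mul_apply, Pi.pow_apply]; ring)
  have hD : HasDerivAt (fun y : ℝ => (exp y - 1) ^ 3) (3 * (exp x - 1)^2 * exp x) x := by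
    have h := (hE.sub_const 1).pow 3
    exact h.congr_deriv (by push_cast; ring)
  have hDne : (exp x - 1) ^ 3 ≠ 0 :=
    pow_ne_zero _ (sub_ne_zero.2 (ne_of_gt (Real.one_lt_exp_iff.2 hx)))
  exact hN.div hD hDne

private lemma F_mono :
    MonotoneOn (fun x : ℝ => x * exp x * (1 + x - exp x) / (exp x - 1) ^ 3) (Ioi 0) := by
  apply monotoneOn_of_deriv_nonneg (convex_Ioi 0)
  · exact fun x hx => (F_hasDerivAt hx).continuousAt.continuousWithinAt
  · rw [interior_Ioi]
    exact fun x hx => (F_hasDerivAt hx).differentiableAt.differentiableWithinAt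
  · rw [interior_Ioi]
    intro x hx
    rw [(F_hasDerivAt hx).deriv]
    apply div_nonneg _ (sq_nonneg _)
    have e : (exp x * (1+3*x+x^2) - exp x ^ 2 * (1+2*x)) * (exp x - 1)^3
        - x * exp x * (1 + x - exp x) * (3 * (exp x - 1)^2 * exp x)
        = (exp x - 1)^2 * exp x
          * ((x-1) * exp x ^ 2 + (2+2*x-2*x^2) * exp x + (-1-3*x-x^2)) := by ring
    rw [e]
    exact mul_nonneg (mul_nonneg (by positivity) (exp_pos x).le) (hQ0 x hx.le)

private lemma F_nonpos {x : ℝ} (hx : 0 < x) :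
    x * exp x * (1 + x - exp x) / (exp x - 1) ^ 3 ≤ 0 := by
  apply div_nonpos_of_nonpos_of_nonneg
  · apply mul_nonpos_of_nonneg_of_nonpos
    · exact mul_nonneg hx.le (exp_pos x).le
    · linarith [Real.add_one_le_exp x]
  · have h1 : (1:ℝ) < exp x := Real.one_lt_exp_iff.2 hx
    exact pow_nonneg (by linarith) 3

private lemma g_mono {c : ℝ} (hc : c ≤ 0) :
    MonotoneOn (fun x : ℝ => x ^ c * (x * exp x * (1 + x - exp x) / (exp x - 1) ^ 3))
      (Ioi 0) := by
  intro a ha b hb hab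
  simp only [mem_Ioi] at ha hb
  have hFa := F_mono (mem_Ioi.2 ha) (mem_Ioi.2 hb) hab
  have hFb0 := F_nonpos hb
  have hpa : (0:ℝ) ≤ a ^ c := (Real.rpow_pos_of_pos ha c).le
  have hpc : b ^ c ≤ a ^ c := Real.rpow_le_rpow_of_nonpos ha hab hc
  have key : b ^ c * -(b * exp b * (1 + b - exp b) / (exp b - 1) ^ 3)
      ≤ a ^ c * -(a * exp a * (1 + a - exp a) / (exp a - 1) ^ 3) :=
    mul_le_mul hpc (by linarith) (by linarith) hpa
  simp only []
  nlinarith [key]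

/-- For `0 < α ≤ 1`, the function
`w(t) = α t^{2α−1} e^{t^α} (1 + t^α − e^{t^α}) / (e^{t^α} − 1)^3` is increasing on `(0, ∞)`. -/
theorem weibull_w_monotone (α : ℝ) (hα : 0 < α) (hα1 : α ≤ 1) :
    MonotoneOn
      (fun t : ℝ =>
        α * t ^ (2 * α - 1) * exp (t ^ α) * (1 + t ^ α - exp (t ^ α)) /
          (exp (t ^ α) - 1) ^ 3)
      (Ioi (0 : ℝ)) := by
  have hc : 1 - 1/α ≤ 0 := by
    have h1 : 1 ≤ 1/α := by
      rw [le_div_iff₀ hα]; linarith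
    linarith
  have key : ∀ t : ℝ, 0 < t →
      α * t ^ (2 * α - 1) * exp (t ^ α) * (1 + t ^ α - exp (t ^ α)) / (exp (t ^ α) - 1) ^ 3
      = α * ((t ^ α) ^ (1 - 1/α) *
        ((t ^ α) * exp (t ^ α) * (1 + t ^ α - exp (t ^ α)) / (exp (t ^ α) - 1) ^ 3)) := by
    intro t ht
    have hx : (0:ℝ) < t ^ α := Real.rpow_pos_of_pos ht α
    have e2 : (t ^ α) ^ (1 - 1/α) * (t ^ α) = t ^ (2*α - 1) := by
      rw [← Real.rpow_add_one (ne_of_gt hx), ← Real.rpow_mul ht.le]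
      congr 1
      field_simp
      ring
    rw [← e2]
    ring
  intro a ha b hb hab
  simp only [mem_Ioi] at ha hb
  have hxa : (0:ℝ) < a ^ α := Real.rpow_pos_of_pos ha α
  have hxb : (0:ℝ) < b ^ α := Real.rpow_pos_of_pos hb α
  have hxab : a ^ α ≤ b ^ α := Real.rpow_le_rpow ha.le hab hα.le
  have hg := g_mono hc (mem_Ioi.2 hxa) (mem_Ioi.2 hxb) hxab
  simp only []
  rw [key a ha, key b hb]
  exact mul_le_mul_of_nonneg_left hg hα.le
end

section
/- Fix a real α with 0 < α ≤ 1 and t > 0, and let λ₁,…,λₙ > 0 and θ₁,…,θₙ > 0 be two families of positive reals such that (λ₁,…,λₙ) is weakly majorized by (θ₁,…,θₙ). Then for every t > 0, the reverse hazard rate of the parallel system satisfies r_{n:n}^λ(t) ≤ r_{n:n}^θ(t), where r_{n:n}^λ(t) = Σ_{i=1}^n α λᵢ^α t^{α−1} / (e^{(λᵢ t)^α} − 1); equivalently, the ratio of distribution functions Π_{i=1}^n (1 − e^{−(θᵢ t)^α}) / Π_{i=1}^n (1 − e^{−(λᵢ t)^α}) is increasing in t on (0, ∞), i.e., the lifetime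 of the parallel system with scale parameters λ is smaller in the reverse hazard rate order than the one with scale parameters θ. -/
open Real Set

/-- `x` is weakly majorized (from below) by `y`: for every `j`, the sum of the `j`
smallest components of `x` is at least the sum of the `j` smallest components of `y`.
Equivalently: for every subset `s` of indices there is a subset `u` of the same
cardinality with `∑_{i ∈ u} y i ≤ ∑_{i ∈ s} x i`. -/
def WeaklyMajorizedBy {n : ℕ} (x y : Fin n → ℝ) : Prop :=
  ∀ s : Finset (Fin n), ∃ u : Finset (Fin n),
    u.card = s.card ∧ ∑ i ∈ u, y i ≤ ∑ i ∈ s, x i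

/-! ### Auxiliary analytic facts about `ψ(u) = u / (eᵘ - 1)` -/

noncomputable def wpsi (u : ℝ) : ℝ := u / (Real.exp u - 1)
noncomputable def wpsi' (u : ℝ) : ℝ :=
  (Real.exp u - 1 - u * Real.exp u) / (Real.exp u - 1) ^ 2
noncomputable def wpsi'' (u : ℝ) : ℝ :=
  Real.exp u * (u * Real.exp u + u - 2 * Real.exp u + 2) / (Real.exp u - 1) ^ 3

lemma key1 (u : ℝ) : Real.exp u - 1 ≤ u * Real.exp u := by
  have h := Real.add_one_le_exp (-u)
  have h2 : (-u + 1) * Real.exp u ≤ Real.exp (-u) * Real.exp u :=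
    mul_le_mul_of_nonneg_right h (Real.exp_pos u).le
  rw [← Real.exp_add] at h2
  simp at h2
  nlinarith

lemma exp_sub_one_pos' {u : ℝ} (hu : 0 < u) : 0 < Real.exp u - 1 := by
  nlinarith [Real.add_one_le_exp u]

lemma key2 {u : ℝ} (hu : 0 ≤ u) : 2 * (Real.exp u - 1) ≤ u * (Real.exp u + 1) := by
  set G : ℝ → ℝ := fun u => u * Real.exp u + u - 2 * Real.exp u + 2 with hG
  have hd : ∀ v : ℝ, HasDerivAt G (v * Real.exp v - Real.exp v + 1) v := by
    intro v
    have h1 : HasDerivAt (fun w : ℝ => w * Real.exp w)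
        (1 * Real.exp v + v * Real.exp v) v :=
      (hasDerivAt_id v).mul (Real.hasDerivAt_exp v)
    have h2 := ((h1.add (hasDerivAt_id v)).sub ((Real.hasDerivAt_exp v).const_mul 2)).add_const 2
    refine h2.congr_deriv ?_
    ring
  have hmono : MonotoneOn G (Ici 0) := by
    apply monotoneOn_of_hasDerivWithinAt_nonneg (convex_Ici 0)
      (fun v _ => (hd v).continuousAt.continuousWithinAt)
      (fun v _ => (hd v).hasDerivWithinAt)
    intro v hv
    nlinarith [key1 v]
  have h0 : G 0 ≤ G u := hmono (mem_Ici.2 le_rfl) (mem_Ici.2 hu) hu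
  simp [hG] at h0
  nlinarith

lemma hasDerivAt_wpsi {u : ℝ} (hu : 0 < u) : HasDerivAt wpsi (wpsi' u) u := by
  have hne : Real.exp u - 1 ≠ 0 := (exp_sub_one_pos' hu).ne'
  have h := (hasDerivAt_id u).div ((Real.hasDerivAt_exp u).sub_const 1) hne
  refine h.congr_deriv ?_
  unfold wpsi'
  field_simp
  simp only [id]

lemma hasDerivAt_wpsi' {u : ℝ} (hu : 0 < u) : HasDerivAt wpsi' (wpsi'' u) u := by
  have hpos := exp_sub_one_pos' hu
  have hne : Real.exp u - 1 ≠ 0 := hpos.ne'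
  have hne2 : (Real.exp u - 1) ^ 2 ≠ 0 := pow_ne_zero 2 hne
  have hN : HasDerivAt (fun v : ℝ => Real.exp v - 1 - v * Real.exp v)
      (Real.exp u - (1 * Real.exp u + u * Real.exp u)) u :=
    ((Real.hasDerivAt_exp u).sub_const 1).sub ((hasDerivAt_id u).mul (Real.hasDerivAt_exp u))
  have hD : HasDerivAt (fun v : ℝ => (Real.exp v - 1) ^ 2)
      ((2 : ℕ) * (Real.exp u - 1) ^ (2 - 1) * Real.exp u) u :=
    ((Real.hasDerivAt_exp u).sub_const 1).pow 2
  have h := hN.div hD hne2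
  refine h.congr_deriv ?_
  unfold wpsi''
  field_simp
  ring

lemma wpsi_convexOn : ConvexOn ℝ (Ioi 0) wpsi := by
  apply convexOn_of_hasDerivWithinAt2_nonneg (f' := wpsi') (f'' := wpsi'') (convex_Ioi 0)
  · exact fun v hv => (hasDerivAt_wpsi hv).continuousAt.continuousWithinAt
  · intro v hv
    rw [interior_Ioi] at hv
    exact (hasDerivAt_wpsi hv).hasDerivWithinAt
  · intro v hv
    rw [interior_Ioi] at hv
    exact (hasDerivAt_wpsi' hv).hasDerivWithinAt
  · intro v hv
    rw [interior_Ioi] at hv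
    unfold wpsi''
    apply div_nonneg (mul_nonneg (Real.exp_pos v).le (by nlinarith [key2 hv.le]))
    exact (pow_pos (exp_sub_one_pos' hv) 3).le

lemma wpsi_anti : AntitoneOn wpsi (Ioi 0) := by
  apply antitoneOn_of_hasDerivWithinAt_nonpos (convex_Ioi 0)
    (fun v hv => (hasDerivAt_wpsi hv).continuousAt.continuousWithinAt)
    (f' := wpsi')
  · intro v hv
    rw [interior_Ioi] at hv
    exact (hasDerivAt_wpsi hv).hasDerivWithinAt
  · intro v hv
    rw [interior_Ioi] at hv
    unfold wpsi'
    apply div_nonpos_of_nonpos_of_nonneg (by nlinarith [key1 v])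
    exact (pow_pos (exp_sub_one_pos' hv) 2).le

/-! ### Combinatorial facts -/

lemma le_emb {j n : ℕ} (e : Fin j ↪o Fin n) (k : Fin j) : (k : ℕ) ≤ (e k : ℕ) := by
  set f : ℕ → ℕ := fun m => if h : m < j then (e ⟨m, h⟩ : ℕ) else m + n with hf
  have hmono : StrictMono f := by
    intro a b hab
    simp only [hf]
    split_ifs with ha hb hb
    · exact e.strictMono (Fin.mk_lt_mk.mpr hab)
    · exact lt_of_lt_of_le (e ⟨a, ha⟩).isLt (Nat.le_add_left _ _)
    · omega
    · omega
  have h := hmono.le_apply (x := (k : ℕ))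
  simpa [hf, k.isLt] using h

lemma smallest_le {n j : ℕ} (Z : Fin n → ℝ) (hZ : Monotone Z) (v : Finset (Fin n))
    (hv : v.card = j) :
    ∑ k ∈ Finset.range j, (if h : k < n then Z ⟨k, h⟩ else 0) ≤ ∑ i ∈ v, Z i := by
  have hjn : j ≤ n := by
    calc j = v.card := hv.symm
    _ ≤ Fintype.card (Fin n) := Finset.card_le_univ v
    _ = n := Fintype.card_fin n
  set e := v.orderEmbOfFin hv with he
  have hL : ∑ k ∈ Finset.range j, (if h : k < n then Z ⟨k, h⟩ else 0)
      = ∑ k : Fin j, Z (Fin.castLE hjn k) := by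
    rw [← Fin.sum_univ_eq_sum_range (fun k => if h : k < n then Z ⟨k, h⟩ else 0) j]
    apply Finset.sum_congr rfl
    intro k _
    rw [dif_pos (lt_of_lt_of_le k.isLt hjn)]
    rfl
  have hv' : v = Finset.image (fun k => e k) Finset.univ := by
    apply Finset.coe_injective
    rw [Finset.coe_image, Finset.coe_univ, Set.image_univ]
    exact (Finset.range_orderEmbOfFin v hv).symm
  have hR : ∑ i ∈ v, Z i = ∑ k : Fin j, Z (e k) := by
    rw [hv', Finset.sum_image (fun a _ b _ hab => e.injective hab)]
  rw [hL, hR]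
  apply Finset.sum_le_sum
  intro k _
  exact hZ (by simpa [Fin.le_def] using le_emb e k)

/-! ### Tomić-type majorization inequality -/

lemma tomic {n : ℕ} (g : ℝ → ℝ)
    (hcvx : ConvexOn ℝ (Ioi 0) g) (hanti : AntitoneOn g (Ioi 0))
    (hdiff : ∀ z ∈ Ioi (0:ℝ), DifferentiableAt ℝ g z)
    (x y : Fin n → ℝ) (hx : ∀ i, 0 < x i) (hy : ∀ i, 0 < y i)
    (hmaj : WeaklyMajorizedBy x y) :
    ∑ i, g (x i) ≤ ∑ i, g (y i) := by
  classical
  rcases Nat.eq_zero_or_pos n with rfl | hn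
  · simp
  set σ := Tuple.sort x with hσ
  set τ := Tuple.sort y with hτ
  set X : Fin n → ℝ := x ∘ σ with hX
  set Y : Fin n → ℝ := y ∘ τ with hY
  have hXm : Monotone X := Tuple.monotone_sort x
  have hYm : Monotone Y := Tuple.monotone_sort y
  have hXpos : ∀ i, 0 < X i := fun i => hx _
  have hYpos : ∀ i, 0 < Y i := fun i => hy _
  have hsumX : ∑ i, g (X i) = ∑ i, g (x i) := Equiv.sum_comp σ (fun i => g (x i))
  have hsumY : ∑ i, g (Y i) = ∑ i, g (y i) := Equiv.sum_comp τ (fun i => g (y i))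
  rw [← hsumX, ← hsumY]
  set Xn : ℕ → ℝ := fun k => if h : k < n then X ⟨k, h⟩ else 0 with hXn
  set Yn : ℕ → ℝ := fun k => if h : k < n then Y ⟨k, h⟩ else 0 with hYn
  -- partial sums inequality
  have hps : ∀ j ≤ n, ∑ k ∈ Finset.range j, Yn k ≤ ∑ k ∈ Finset.range j, Xn k := by
    intro j hj
    set s : Finset (Fin n) := Finset.image (fun k : Fin j => σ (Fin.castLE hj k)) Finset.univ
      with hs
    have hinj : Function.Injective (fun k : Fin j => σ (Fin.castLE hj k)) :=
      σ.injective.comp (Fin.castLE_injective hj)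
    have hcards : s.card = j := by
      rw [hs, Finset.card_image_of_injective _ hinj, Finset.card_univ, Fintype.card_fin]
    obtain ⟨u, hu1, hu2⟩ := hmaj s
    have hsx : ∑ i ∈ s, x i = ∑ k ∈ Finset.range j, Xn k := by
      rw [hs, Finset.sum_image (fun a _ b _ hab => hinj hab),
        ← Fin.sum_univ_eq_sum_range Xn j]
      apply Finset.sum_congr rfl
      intro k _
      have hk : (k : ℕ) < n := lt_of_lt_of_le k.isLt hj
      simp only [hXn, dif_pos hk]
      rfl
    have huy : ∑ k ∈ Finset.range j, Yn k ≤ ∑ i ∈ u, y i := by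
      set v := Finset.image (fun i => τ.symm i) u with hv
      have hcardv : v.card = j := by
        rw [hv, Finset.card_image_of_injective _ τ.symm.injective, hu1, hcards]
      have h1 := smallest_le Y hYm v hcardv
      have h2 : ∑ i ∈ v, Y i = ∑ i ∈ u, y i := by
        rw [hv, Finset.sum_image (fun a _ b _ hab => τ.symm.injective hab)]
        apply Finset.sum_congr rfl
        intro i _
        simp [hY]
      calc ∑ k ∈ Finset.range j, Yn k ≤ ∑ i ∈ v, Y i := h1
        _ = ∑ i ∈ u, y i := h2
    calc ∑ k ∈ Finset.range j, Yn k ≤ ∑ i ∈ u, y i := huy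
      _ ≤ ∑ i ∈ s, x i := hu2
      _ = ∑ k ∈ Finset.range j, Xn k := hsx
  -- support line inequality
  have hkey : ∀ i : Fin n, g (X i) - g (Y i) ≤ deriv g (X i) * (X i - Y i) := by
    intro i
    rcases lt_trichotomy (X i) (Y i) with h | h | h
    · have hsl := hcvx.deriv_le_slope (mem_Ioi.2 (hXpos i)) (mem_Ioi.2 (hYpos i)) h
        (hdiff _ (mem_Ioi.2 (hXpos i)))
      rw [slope_def_field] at hsl
      have hd : 0 < Y i - X i := by linarith
      nlinarith [mul_le_mul_of_nonneg_right hsl hd.le,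
        div_mul_cancel₀ (g (Y i) - g (X i)) hd.ne']
    · rw [h]; simp
    · have hsl := hcvx.slope_le_deriv (mem_Ioi.2 (hYpos i)) (mem_Ioi.2 (hXpos i)) h
        (hdiff _ (mem_Ioi.2 (hXpos i)))
      rw [slope_def_field] at hsl
      have hd : 0 < X i - Y i := by linarith
      nlinarith [mul_le_mul_of_nonneg_right hsl hd.le,
        div_mul_cancel₀ (g (X i) - g (Y i)) hd.ne']
  have hmono : MonotoneOn (deriv g) (Ioi 0) := hcvx.monotoneOn_deriv hdiff
  have hnonpos : ∀ z ∈ Ioi (0:ℝ), deriv g z ≤ 0 := by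
    intro z hz
    have hz1 : z + 1 ∈ Ioi (0:ℝ) := by simp only [mem_Ioi] at hz ⊢; linarith
    have h1 := hcvx.deriv_le_slope hz hz1 (by linarith) (hdiff z hz)
    rw [slope_def_field] at h1
    have h2 : g (z + 1) ≤ g z := hanti hz hz1 (by linarith)
    calc deriv g z ≤ (g (z+1) - g z) / (z + 1 - z) := h1
      _ ≤ 0 := by
          apply div_nonpos_of_nonpos_of_nonneg <;> linarith
  -- Abel summation
  set s : ℕ → ℝ := fun k => if h : k < n then deriv g (X ⟨k, h⟩) else 0 with hsdef
  set d : ℕ → ℝ := fun k => Xn k - Yn k with hd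
  have hstep : ∑ i : Fin n, (g (X i) - g (Y i)) ≤ ∑ k ∈ Finset.range n, s k * d k := by
    rw [← Fin.sum_univ_eq_sum_range (fun k => s k * d k) n]
    apply Finset.sum_le_sum
    intro i _
    have h1 : s (i : ℕ) = deriv g (X i) := by rw [hsdef]; simp [i.isLt]
    have h2 : d (i : ℕ) = X i - Y i := by rw [hd, hXn, hYn]; simp [i.isLt]
    rw [h1, h2]
    exact hkey i
  have habel := Finset.sum_range_by_parts s d n
  have hD : ∀ m ≤ n, 0 ≤ ∑ k ∈ Finset.range m, d k := by
    intro m hm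
    rw [hd]
    rw [Finset.sum_sub_distrib]
    have := hps m hm
    linarith
  have hsmono : ∀ a b : ℕ, a ≤ b → b < n → s a ≤ s b := by
    intro a b hab hbn
    have han : a < n := lt_of_le_of_lt hab hbn
    rw [hsdef]
    simp only [dif_pos han, dif_pos hbn]
    exact hmono (mem_Ioi.2 (hXpos _)) (mem_Ioi.2 (hXpos _)) (hXm (Fin.mk_le_mk.mpr hab))
  have hfin : ∑ k ∈ Finset.range n, s k * d k ≤ 0 := by
    have h1 : s (n - 1) * (∑ k ∈ Finset.range n, d k) ≤ 0 := by
      apply mul_nonpos_of_nonpos_of_nonneg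
      · have : n - 1 < n := Nat.sub_lt hn one_pos
        rw [hsdef]
        simp only [dif_pos this]
        exact hnonpos _ (mem_Ioi.2 (hXpos _))
      · exact hD n le_rfl
    have h2 : 0 ≤ ∑ i ∈ Finset.range (n - 1),
        (s (i + 1) - s i) * (∑ j ∈ Finset.range (i + 1), d j) := by
      apply Finset.sum_nonneg
      intro i hi
      rw [Finset.mem_range] at hi
      have hin : i + 1 < n := by omega
      apply mul_nonneg
      · have := hsmono i (i + 1) (Nat.le_succ i) hin
        linarith
      · exact hD (i + 1) (by omega)
    simp only [smul_eq_mul] at habel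
    rw [habel]
    linarith
  calc ∑ i, g (X i) = ∑ i, g (Y i) + ∑ i : Fin n, (g (X i) - g (Y i)) := by
        rw [← Finset.sum_add_distrib]; apply Finset.sum_congr rfl; intros; ring
    _ ≤ ∑ i, g (Y i) + 0 := by
        have := le_trans hstep hfin
        linarith
    _ = ∑ i, g (Y i) := by ring

/-! ### The reverse hazard rate summand as a nice function -/

section haz
variable {α t : ℝ}

lemma haz_deriv (hα : 0 < α) (ht : 0 < t) {z : ℝ} (hz : 0 < z) :
    HasDerivAt (fun z : ℝ => (α / t) * wpsi ((z * t) ^ α))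
      ((α / t) * (wpsi' ((z * t) ^ α) * (α * (z * t) ^ (α - 1) * t))) z := by
  have hzt : 0 < z * t := mul_pos hz ht
  have h1 : HasDerivAt (fun z : ℝ => z * t) t z := hasDerivAt_mul_const t
  have h2 : HasDerivAt (fun z : ℝ => (z * t) ^ α) (α * (z * t) ^ (α - 1) * t) z := by
    have := (Real.hasDerivAt_rpow_const (x := z * t) (p := α) (Or.inl hzt.ne')).comp z h1
    exact this
  have h3 : HasDerivAt (fun z : ℝ => wpsi ((z * t) ^ α))
      (wpsi' ((z * t) ^ α) * (α * (z * t) ^ (α - 1) * t)) z := by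
    have := (hasDerivAt_wpsi (Real.rpow_pos_of_pos hzt α)).comp z h2
    exact this
  exact h3.const_mul (α / t)

lemma haz_convex (hα : 0 < α) (hα1 : α ≤ 1) (ht : 0 < t) :
    ConvexOn ℝ (Ioi 0) (fun z : ℝ => (α / t) * wpsi ((z * t) ^ α)) := by
  have hc : 0 ≤ α / t := le_of_lt (div_pos hα ht)
  have hconc := Real.concaveOn_rpow hα.le hα1
  refine ⟨convex_Ioi 0, ?_⟩
  intro p hp q hq a b ha hb hab
  simp only [mem_Ioi] at hp hq
  have hpt : 0 < p * t := mul_pos hp ht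
  have hqt : 0 < q * t := mul_pos hq ht
  have hw : a * (p * t) ^ α + b * (q * t) ^ α ≤ ((a * p + b * q) * t) ^ α := by
    have := hconc.2 (mem_Ici.2 hpt.le) (mem_Ici.2 hqt.le) ha hb hab
    simp only [smul_eq_mul] at this
    have heq : a * (p * t) + b * (q * t) = (a * p + b * q) * t := by ring
    rw [heq] at this
    exact this
  have hwp : 0 < (p * t) ^ α := Real.rpow_pos_of_pos hpt α
  have hwq : 0 < (q * t) ^ α := Real.rpow_pos_of_pos hqt α
  have hmidpos : 0 < a * (p * t) ^ α + b * (q * t) ^ α := by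
    rcases eq_or_lt_of_le ha with ha' | ha'
    · have hb1 : b = 1 := by linarith
      rw [← ha', hb1]; simpa using hwq
    · nlinarith [mul_nonneg hb hwq.le]
  have hmix : 0 < a * p + b * q := by
    rcases eq_or_lt_of_le ha with ha' | ha'
    · have hb1 : b = 1 := by linarith
      rw [← ha', hb1]; simpa using hq
    · nlinarith [mul_nonneg hb hq.le]
  have h1 : wpsi (((a * p + b * q) * t) ^ α) ≤ wpsi (a * (p * t) ^ α + b * (q * t) ^ α) :=
    wpsi_anti (mem_Ioi.2 hmidpos)
      (mem_Ioi.2 (Real.rpow_pos_of_pos (mul_pos hmix ht) α)) hw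
  have h2 : wpsi (a * (p * t) ^ α + b * (q * t) ^ α)
      ≤ a * wpsi ((p * t) ^ α) + b * wpsi ((q * t) ^ α) := by
    have := wpsi_convexOn.2 (mem_Ioi.2 hwp) (mem_Ioi.2 hwq) ha hb hab
    simpa using this
  simp only [smul_eq_mul]
  calc (α / t) * wpsi (((a * p + b * q) * t) ^ α)
      ≤ (α / t) * (a * wpsi ((p * t) ^ α) + b * wpsi ((q * t) ^ α)) := by
        apply mul_le_mul_of_nonneg_left (le_trans h1 h2) hc
    _ = a * ((α / t) * wpsi ((p * t) ^ α)) + b * ((α / t) * wpsi ((q * t) ^ α)) := by ring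

lemma haz_anti (hα : 0 < α) (ht : 0 < t) :
    AntitoneOn (fun z : ℝ => (α / t) * wpsi ((z * t) ^ α)) (Ioi 0) := by
  intro p hp q hq hpq
  simp only [mem_Ioi] at hp hq
  have h1 : (p * t) ^ α ≤ (q * t) ^ α :=
    Real.rpow_le_rpow (mul_pos hp ht).le (by nlinarith) hα.le
  have h2 := wpsi_anti (mem_Ioi.2 (Real.rpow_pos_of_pos (mul_pos hp ht) α))
    (mem_Ioi.2 (Real.rpow_pos_of_pos (mul_pos hq ht) α)) h1
  exact mul_le_mul_of_nonneg_left h2 (div_pos hα ht).le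

/-! ### Part 1: comparison of reverse hazard rates -/

lemma hazard_le {n : ℕ} (hα : 0 < α) (hα1 : α ≤ 1)
    (lam θ : Fin n → ℝ) (hlam : ∀ i, 0 < lam i) (hθ : ∀ i, 0 < θ i)
    (hmaj : WeaklyMajorizedBy lam θ) (ht : 0 < t) :
    ∑ i, α * lam i ^ α * t ^ (α - 1) / (Real.exp ((lam i * t) ^ α) - 1) ≤
      ∑ i, α * θ i ^ α * t ^ (α - 1) / (Real.exp ((θ i * t) ^ α) - 1) := by
  have hval : ∀ z : ℝ, 0 < z →
      α * z ^ α * t ^ (α - 1) / (Real.exp ((z * t) ^ α) - 1)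
        = (α / t) * wpsi ((z * t) ^ α) := by
    intro z hz
    unfold wpsi
    rw [Real.mul_rpow hz.le ht.le]
    rw [show α - 1 = α - (1:ℝ) from rfl, Real.rpow_sub ht, Real.rpow_one]
    have hE : Real.exp ((z ^ α * t ^ α)) - 1 ≠ 0 :=
      (exp_sub_one_pos' (by positivity)).ne'
    field_simp
  calc ∑ i, α * lam i ^ α * t ^ (α - 1) / (Real.exp ((lam i * t) ^ α) - 1)
      = ∑ i, (α / t) * wpsi ((lam i * t) ^ α) :=
        Finset.sum_congr rfl fun i _ => hval _ (hlam i)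
    _ ≤ ∑ i, (α / t) * wpsi ((θ i * t) ^ α) := by
        apply tomic (fun z : ℝ => (α / t) * wpsi ((z * t) ^ α))
          (haz_convex hα hα1 ht) (haz_anti hα ht)
          (fun z hz => (haz_deriv hα ht hz).differentiableAt) lam θ hlam hθ hmaj
    _ = ∑ i, α * θ i ^ α * t ^ (α - 1) / (Real.exp ((θ i * t) ^ α) - 1) :=
        (Finset.sum_congr rfl fun i _ => hval _ (hθ i)).symm

end haz

/-! ### Part 2: monotonicity of the ratio of distribution functions -/

section part2
variable {α : ℝ}

lemma fact_pos (hα : 0 < α) {c t : ℝ} (hc : 0 < c) (ht : 0 < t) :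
    0 < 1 - Real.exp (-((c * t) ^ α)) := by
  have hu : 0 < (c * t) ^ α := Real.rpow_pos_of_pos (mul_pos hc ht) α
  have : Real.exp (-((c * t) ^ α)) < Real.exp 0 := Real.exp_lt_exp.2 (by linarith)
  simp only [Real.exp_zero] at this
  linarith

lemma fact_deriv (hα : 0 < α) {c t : ℝ} (hc : 0 < c) (ht : 0 < t) :
    HasDerivAt (fun t : ℝ => 1 - Real.exp (-((c * t) ^ α)))
      (Real.exp (-((c * t) ^ α)) * (α * (c * t) ^ (α - 1) * c)) t := by
  have h1 : HasDerivAt (fun s : ℝ => c * s) c t := by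
    simpa using (hasDerivAt_id t).const_mul c
  have h2 : HasDerivAt (fun s : ℝ => (c * s) ^ α) (α * (c * t) ^ (α - 1) * c) t :=
    (Real.hasDerivAt_rpow_const (x := c * t) (p := α)
      (Or.inl (mul_pos hc ht).ne')).comp t h1
  have h3 := (h2.neg).exp
  have h4 := h3.const_sub 1
  refine h4.congr_deriv ?_
  simp only [Pi.neg_apply]
  ring

lemma prod_deriv (hα : 0 < α) {n : ℕ} (Z : Fin n → ℝ) (hZ : ∀ i, 0 < Z i)
    {t : ℝ} (ht : 0 < t) :
    HasDerivAt (fun t : ℝ => ∏ i, (1 - Real.exp (-((Z i * t) ^ α))))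
      ((∏ i, (1 - Real.exp (-((Z i * t) ^ α)))) *
        ∑ i, α * Z i ^ α * t ^ (α - 1) / (Real.exp ((Z i * t) ^ α) - 1)) t := by
  classical
  have h := HasDerivAt.fun_finsetProd (u := (Finset.univ : Finset (Fin n)))
    (f := fun i (s : ℝ) => 1 - Real.exp (-((Z i * s) ^ α)))
    (f' := fun i => Real.exp (-((Z i * t) ^ α)) * (α * (Z i * t) ^ (α - 1) * Z i))
    (fun i _ => fact_deriv hα (hZ i) ht)
  refine h.congr_deriv ?_
  rw [Finset.mul_sum]
  apply Finset.sum_congr rfl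
  intro i _
  have hu : 0 < (Z i * t) ^ α := Real.rpow_pos_of_pos (mul_pos (hZ i) ht) α
  have hP : (∏ j, (1 - Real.exp (-((Z j * t) ^ α))))
      = (∏ j ∈ Finset.univ.erase i, (1 - Real.exp (-((Z j * t) ^ α))))
        * (1 - Real.exp (-((Z i * t) ^ α))) :=
    (Finset.prod_erase_mul _ _ (Finset.mem_univ i)).symm
  rw [hP, smul_eq_mul]
  have hsc : (1 - Real.exp (-((Z i * t) ^ α)))
        * (α * Z i ^ α * t ^ (α - 1) / (Real.exp ((Z i * t) ^ α) - 1))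
      = Real.exp (-((Z i * t) ^ α)) * (α * (Z i * t) ^ (α - 1) * Z i) := by
    have hZt : 0 < Z i * t := mul_pos (hZ i) ht
    rw [Real.mul_rpow (hZ i).le ht.le, Real.exp_neg]
    have hE : Real.exp ((Z i * t) ^ α) ≠ 0 := (Real.exp_pos _).ne'
    have hE1 : Real.exp ((Z i * t) ^ α) - 1 ≠ 0 := (exp_sub_one_pos' hu).ne'
    rw [Real.mul_rpow (hZ i).le ht.le] at hE hE1 ⊢
    have hZa : Z i ^ (α - 1) * Z i = Z i ^ α := by
      rw [← Real.rpow_add_one (hZ i).ne' (α - 1), sub_add_cancel]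
    generalize Real.exp (Z i ^ α * t ^ α) = E at hE hE1 ⊢
    rw [← hZa]
    field_simp
  symm
  calc (∏ j ∈ Finset.univ.erase i, (1 - Real.exp (-((Z j * t) ^ α))))
        * (1 - Real.exp (-((Z i * t) ^ α)))
        * (α * Z i ^ α * t ^ (α - 1) / (Real.exp ((Z i * t) ^ α) - 1))
      = (∏ j ∈ Finset.univ.erase i, (1 - Real.exp (-((Z j * t) ^ α))))
        * ((1 - Real.exp (-((Z i * t) ^ α)))
          * (α * Z i ^ α * t ^ (α - 1) / (Real.exp ((Z i * t) ^ α) - 1))) := by ring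
    _ = (∏ j ∈ Finset.univ.erase i, (1 - Real.exp (-((Z j * t) ^ α))))
        * (Real.exp (-((Z i * t) ^ α)) * (α * (Z i * t) ^ (α - 1) * Z i)) := by rw [hsc]

lemma ratio_mono {n : ℕ} (hα : 0 < α) (hα1 : α ≤ 1)
    (lam θ : Fin n → ℝ) (hlam : ∀ i, 0 < lam i) (hθ : ∀ i, 0 < θ i)
    (hmaj : WeaklyMajorizedBy lam θ) :
    MonotoneOn
      (fun t : ℝ =>
        (∏ i, (1 - Real.exp (-((θ i * t) ^ α)))) /
          ∏ i, (1 - Real.exp (-((lam i * t) ^ α))))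
      (Ioi (0 : ℝ)) := by
  have hQpos : ∀ t : ℝ, 0 < t → 0 < ∏ i, (1 - Real.exp (-((lam i * t) ^ α))) :=
    fun t ht => Finset.prod_pos fun i _ => fact_pos hα (hlam i) ht
  have hPpos : ∀ t : ℝ, 0 < t → 0 < ∏ i, (1 - Real.exp (-((θ i * t) ^ α))) :=
    fun t ht => Finset.prod_pos fun i _ => fact_pos hα (hθ i) ht
  have hR : ∀ t : ℝ, 0 < t → HasDerivAt
      (fun t : ℝ =>
        (∏ i, (1 - Real.exp (-((θ i * t) ^ α)))) /
          ∏ i, (1 - Real.exp (-((lam i * t) ^ α))))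
      ((((∏ i, (1 - Real.exp (-((θ i * t) ^ α)))) *
          ∑ i, α * θ i ^ α * t ^ (α - 1) / (Real.exp ((θ i * t) ^ α) - 1)) *
          (∏ i, (1 - Real.exp (-((lam i * t) ^ α)))) -
        (∏ i, (1 - Real.exp (-((θ i * t) ^ α)))) *
          ((∏ i, (1 - Real.exp (-((lam i * t) ^ α)))) *
            ∑ i, α * lam i ^ α * t ^ (α - 1) / (Real.exp ((lam i * t) ^ α) - 1))) /
        (∏ i, (1 - Real.exp (-((lam i * t) ^ α)))) ^ 2) t := by
    intro t ht
    exact (prod_deriv hα θ hθ ht).div (prod_deriv hα lam hlam ht) (hQpos t ht).ne'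
  have hderiv_nonneg : ∀ t : ℝ, 0 < t →
      0 ≤ ((((∏ i, (1 - Real.exp (-((θ i * t) ^ α)))) *
          ∑ i, α * θ i ^ α * t ^ (α - 1) / (Real.exp ((θ i * t) ^ α) - 1)) *
          (∏ i, (1 - Real.exp (-((lam i * t) ^ α)))) -
        (∏ i, (1 - Real.exp (-((θ i * t) ^ α)))) *
          ((∏ i, (1 - Real.exp (-((lam i * t) ^ α)))) *
            ∑ i, α * lam i ^ α * t ^ (α - 1) / (Real.exp ((lam i * t) ^ α) - 1))) /
        (∏ i, (1 - Real.exp (-((lam i * t) ^ α)))) ^ 2) := by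
    intro t ht
    apply div_nonneg _ (sq_nonneg _)
    have hAB := hazard_le hα hα1 lam θ hlam hθ hmaj ht
    nlinarith [hPpos t ht, hQpos t ht, mul_pos (hPpos t ht) (hQpos t ht)]
  apply monotoneOn_of_deriv_nonneg (convex_Ioi 0)
  · exact fun t ht => (hR t ht).continuousAt.continuousWithinAt
  · rw [interior_Ioi]
    exact fun t ht => (hR t ht).differentiableAt.differentiableWithinAt
  · rw [interior_Ioi]
    intro t ht
    rw [(hR t ht).deriv]
    exact hderiv_nonneg t ht

end part2

/-- If `(λ₁,…,λₙ) ≼^w (θ₁,…,θₙ)` and `0 < α ≤ 1`, then for every `t > 0` the reverse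
hazard rate of the parallel Weibull system with scale parameters `λ` is at most that of
the system with scale parameters `θ`; equivalently, the ratio of the distribution
functions is increasing in `t` on `(0, ∞)`, i.e. `X_{n:n}^λ ≤_rh X_{n:n}^θ`. -/
theorem parallel_weibull_rh_order_weak_majorization
    {n : ℕ} (α : ℝ) (hα : 0 < α) (hα1 : α ≤ 1)
    (lam θ : Fin n → ℝ) (hlam : ∀ i, 0 < lam i) (hθ : ∀ i, 0 < θ i)
    (hmaj : WeaklyMajorizedBy lam θ) :
    (∀ t : ℝ, 0 < t →
      ∑ i, α * lam i ^ α * t ^ (α - 1) / (exp ((lam i * t) ^ α) - 1) ≤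
        ∑ i, α * θ i ^ α * t ^ (α - 1) / (exp ((θ i * t) ^ α) - 1)) ∧
    MonotoneOn
      (fun t : ℝ =>
        (∏ i, (1 - exp (-((θ i * t) ^ α)))) / ∏ i, (1 - exp (-((lam i * t) ^ α))))
      (Ioi (0 : ℝ)) := by
  exact ⟨fun t ht => hazard_le hα hα1 lam θ hlam hθ hmaj ht,
    ratio_mono hα hα1 lam θ hlam hθ hmaj⟩
end

section
/- Fix a real α with 0 < α ≤ 1, and let λ₁, λ₂ > 0 and θ₁, θ₂ > 0 be positive reals such that (λ₁, λ₂) is majorized by (θ₁, θ₂), i.e., λ₁ + λ₂ = θ₁ + θ₂ and max(λ₁, λ₂) ≤ max(θ₁, θ₂). Then the ratio of reverse hazard rates r_{2:2}^θ(t) / r_{2:2}^λ(t) = [u(θ₁ t) + u(θ₂ t)] / [u(λ₁ t) + u(λ₂ t)], where u(s) = s^α / (e^{s^α} − 1), is increasing in t on (0, ∞). -/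
open Real Set

set_option maxHeartbeats 2000000

noncomputable def gg (x : ℝ) : ℝ := x / (exp x - 1)
noncomputable def qq (x : ℝ) : ℝ := x * exp x / (exp x - 1)
noncomputable def gq (x : ℝ) : ℝ := x ^ 2 * exp x / (exp x - 1) ^ 2
noncomputable def gd (x : ℝ) : ℝ := (exp x - 1 - x * exp x) / (exp x - 1) ^ 2
noncomputable def qd (x : ℝ) : ℝ := exp x * (exp x - 1 - x) / (exp x - 1) ^ 2
noncomputable def gqd (x : ℝ) : ℝ :=
  x * exp x * ((2 + x) * (exp x - 1) - 2 * x * exp x) / (exp x - 1) ^ 3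
noncomputable def G2 (x : ℝ) : ℝ := x * exp x * (exp x - 1 - x) / (exp x - 1) ^ 3

lemma em1_pos {x : ℝ} (hx : 0 < x) : 0 < exp x - 1 := by
  have := Real.add_one_lt_exp (ne_of_gt hx); linarith

lemma em1x_pos {x : ℝ} (hx : 0 < x) : 0 < exp x - 1 - x := by
  have := Real.add_one_lt_exp (ne_of_gt hx); linarith

lemma gg_pos {x : ℝ} (hx : 0 < x) : 0 < gg x := div_pos hx (em1_pos hx)

lemma gq_pos {x : ℝ} (hx : 0 < x) : 0 < gq x :=
  div_pos (mul_pos (pow_pos hx 2) (exp_pos x)) (pow_pos (em1_pos hx) 2)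

lemma gq_eq {x : ℝ} (hx : 0 < x) : gq x = gg x * qq x := by
  unfold gq gg qq
  have h := (em1_pos hx).ne'
  field_simp

lemma x_gd_eq {x : ℝ} (hx : 0 < x) : x * gd x = gg x - gq x := by
  unfold gd gg gq
  have h := (em1_pos hx).ne'
  field_simp

lemma gd_nonpos {x : ℝ} (hx : 0 < x) : gd x ≤ 0 := by
  have h1 : -x + 1 ≤ exp (-x) := Real.add_one_le_exp (-x)
  have h2 : 0 < exp x := exp_pos x
  have h5 : exp x - 1 - x * exp x ≤ 0 := by
    have h6 := mul_le_mul_of_nonneg_right h1 h2.le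
    rw [← Real.exp_add] at h6
    simp only [neg_add_cancel, Real.exp_zero] at h6
    nlinarith
  exact div_nonpos_of_nonpos_of_nonneg h5 (by positivity)

lemma qd_nonneg {x : ℝ} (hx : 0 < x) : 0 ≤ qd x := by
  unfold qd
  have := em1x_pos hx
  positivity

lemma P_nonneg {x : ℝ} (hx : 0 ≤ x) :
    0 ≤ (x - 1) * exp x ^ 2 + (-2 * x ^ 2 + 2 * x + 2) * exp x - x ^ 2 - 3 * x - 1 := by
  set E := exp x with hE
  clear_value E
  have hl : 1 + x + x ^ 2 / 2 + x ^ 3 / 6 + x ^ 4 / 24 + x ^ 5 / 120 ≤ E := by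
    have := Real.sum_le_exp_of_nonneg hx 6
    simp [Finset.sum_range_succ, Nat.factorial] at this
    rw [hE]; linarith
  rcases le_total x 1 with h1 | h1
  · have hu : E ≤ 1 + x + x ^ 2 / 2 + x ^ 3 / 6 + x ^ 4 / 24 + x ^ 5 / 120 + 7 * x ^ 6 / 4320 := by
      have := Real.exp_bound' hx h1 (n := 6) (by norm_num)
      simp [Finset.sum_range_succ, Nat.factorial] at this
      rw [hE]; linarith
    rcases eq_or_lt_of_le hx with h0 | h0
    · have hl' : (1:ℝ) ≤ E := by rw [← h0] at hl; norm_num at hl; linarith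
      have hu' : E ≤ 1 := by rw [← h0] at hu; norm_num at hu; linarith
      rw [← h0]
      nlinarith [mul_nonneg (by linarith : (0:ℝ) ≤ E - 1) (by linarith : (0:ℝ) ≤ 1 - E)]
    · have h1x : (0:ℝ) ≤ 1 - x := by linarith
      have hk : (0:ℝ) < 7 * x ^ 6 / 4320 := by positivity
      have hEl : (0:ℝ) ≤ E - (1 + x + x ^ 2 / 2 + x ^ 3 / 6 + x ^ 4 / 24 + x ^ 5 / 120) := by linarith
      have hEu : (0:ℝ) ≤ (1 + x + x ^ 2 / 2 + x ^ 3 / 6 + x ^ 4 / 24 + x ^ 5 / 120 + 7 * x ^ 6 / 4320) - E := by linarith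
      have hPlE : 0 ≤ (x - 1) * (1 + x + x ^ 2 / 2 + x ^ 3 / 6 + x ^ 4 / 24 + x ^ 5 / 120) ^ 2
          + (-2 * x ^ 2 + 2 * x + 2) * (1 + x + x ^ 2 / 2 + x ^ 3 / 6 + x ^ 4 / 24 + x ^ 5 / 120)
          - x ^ 2 - 3 * x - 1 := by
        nlinarith [(by positivity : (0:ℝ) ≤ x ^ 4 / 12 + x ^ 5 / 6 + 41 * x ^ 6 / 360 + 17 * x ^ 7 / 360
          + 17 * x ^ 8 / 960 + 11 * x ^ 9 / 2880 + x ^ 10 / 1600 + x ^ 11 / 14400)]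
      have hPuE : 0 ≤ (x - 1) * (1 + x + x ^ 2 / 2 + x ^ 3 / 6 + x ^ 4 / 24 + x ^ 5 / 120 + 7 * x ^ 6 / 4320) ^ 2
          + (-2 * x ^ 2 + 2 * x + 2) * (1 + x + x ^ 2 / 2 + x ^ 3 / 6 + x ^ 4 / 24 + x ^ 5 / 120 + 7 * x ^ 6 / 4320)
          - x ^ 2 - 3 * x - 1 := by
        nlinarith [(by positivity : (0:ℝ) ≤ x ^ 4 / 12 + x ^ 5 / 6 + 41 * x ^ 6 / 360 + 109 * x ^ 7 / 2160
          + 139 * x ^ 8 / 8640 + 127 * x ^ 9 / 25920 + 89 * x ^ 10 / 86400 + 23 * x ^ 11 / 129600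
          + 91 * x ^ 12 / 3732480 + 49 * x ^ 13 / 18662400)]
      have key : 0 ≤ ((1 + x + x ^ 2 / 2 + x ^ 3 / 6 + x ^ 4 / 24 + x ^ 5 / 120 + 7 * x ^ 6 / 4320) - E)
            * ((x - 1) * (1 + x + x ^ 2 / 2 + x ^ 3 / 6 + x ^ 4 / 24 + x ^ 5 / 120) ^ 2
              + (-2 * x ^ 2 + 2 * x + 2) * (1 + x + x ^ 2 / 2 + x ^ 3 / 6 + x ^ 4 / 24 + x ^ 5 / 120)
              - x ^ 2 - 3 * x - 1)
          + (E - (1 + x + x ^ 2 / 2 + x ^ 3 / 6 + x ^ 4 / 24 + x ^ 5 / 120))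
            * ((x - 1) * (1 + x + x ^ 2 / 2 + x ^ 3 / 6 + x ^ 4 / 24 + x ^ 5 / 120 + 7 * x ^ 6 / 4320) ^ 2
              + (-2 * x ^ 2 + 2 * x + 2) * (1 + x + x ^ 2 / 2 + x ^ 3 / 6 + x ^ 4 / 24 + x ^ 5 / 120 + 7 * x ^ 6 / 4320)
              - x ^ 2 - 3 * x - 1)
          + (1 - x) * (E - (1 + x + x ^ 2 / 2 + x ^ 3 / 6 + x ^ 4 / 24 + x ^ 5 / 120))
            * ((1 + x + x ^ 2 / 2 + x ^ 3 / 6 + x ^ 4 / 24 + x ^ 5 / 120 + 7 * x ^ 6 / 4320) - E)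
            * (7 * x ^ 6 / 4320) := by
        have t1 := mul_nonneg hEu hPlE
        have t2 := mul_nonneg hEl hPuE
        have t3 := mul_nonneg (mul_nonneg (mul_nonneg h1x hEl) hEu) hk.le
        linarith
      have heq : ((x - 1) * E ^ 2 + (-2 * x ^ 2 + 2 * x + 2) * E - x ^ 2 - 3 * x - 1) * (7 * x ^ 6 / 4320)
          = ((1 + x + x ^ 2 / 2 + x ^ 3 / 6 + x ^ 4 / 24 + x ^ 5 / 120 + 7 * x ^ 6 / 4320) - E)
            * ((x - 1) * (1 + x + x ^ 2 / 2 + x ^ 3 / 6 + x ^ 4 / 24 + x ^ 5 / 120) ^ 2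
              + (-2 * x ^ 2 + 2 * x + 2) * (1 + x + x ^ 2 / 2 + x ^ 3 / 6 + x ^ 4 / 24 + x ^ 5 / 120)
              - x ^ 2 - 3 * x - 1)
          + (E - (1 + x + x ^ 2 / 2 + x ^ 3 / 6 + x ^ 4 / 24 + x ^ 5 / 120))
            * ((x - 1) * (1 + x + x ^ 2 / 2 + x ^ 3 / 6 + x ^ 4 / 24 + x ^ 5 / 120 + 7 * x ^ 6 / 4320) ^ 2
              + (-2 * x ^ 2 + 2 * x + 2) * (1 + x + x ^ 2 / 2 + x ^ 3 / 6 + x ^ 4 / 24 + x ^ 5 / 120 + 7 * x ^ 6 / 4320)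
              - x ^ 2 - 3 * x - 1)
          + (1 - x) * (E - (1 + x + x ^ 2 / 2 + x ^ 3 / 6 + x ^ 4 / 24 + x ^ 5 / 120))
            * ((1 + x + x ^ 2 / 2 + x ^ 3 / 6 + x ^ 4 / 24 + x ^ 5 / 120 + 7 * x ^ 6 / 4320) - E)
            * (7 * x ^ 6 / 4320) := by ring
      rw [← heq] at key
      exact le_of_mul_le_mul_right (by linarith) hk
  · have hx0 : (0:ℝ) ≤ x := hx
    have hs : (0:ℝ) ≤ x - 1 := by linarith
    have hq : (0:ℝ) ≤ x ^ 3 / 6 + x ^ 4 / 24 + x ^ 5 / 120 := by positivity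
    have hEl : (0:ℝ) ≤ E - (1 + x + x ^ 2 / 2 + x ^ 3 / 6 + x ^ 4 / 24 + x ^ 5 / 120) := by linarith
    have hE2 : (0:ℝ) ≤ E - (1 + x + x ^ 2 / 2) := by linarith
    have hPl : 0 ≤ (x - 1) * (1 + x + x ^ 2 / 2 + x ^ 3 / 6 + x ^ 4 / 24 + x ^ 5 / 120) ^ 2
        + (-2 * x ^ 2 + 2 * x + 2) * (1 + x + x ^ 2 / 2 + x ^ 3 / 6 + x ^ 4 / 24 + x ^ 5 / 120)
        - x ^ 2 - 3 * x - 1 := by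
      nlinarith [pow_nonneg hs 2, pow_nonneg hs 3, pow_nonneg hs 4, pow_nonneg hs 5,
        pow_nonneg hs 6, pow_nonneg hs 7, pow_nonneg hs 8, pow_nonneg hs 9,
        pow_nonneg hs 10, pow_nonneg hs 11]
    have h2 : 0 ≤ (x - 1) * (E + (1 + x + x ^ 2 / 2 + x ^ 3 / 6 + x ^ 4 / 24 + x ^ 5 / 120))
        + (-2 * x ^ 2 + 2 * x + 2) := by
      nlinarith [mul_nonneg hs hE2, mul_nonneg hs hq, mul_nonneg hs (sq_nonneg x)]
    nlinarith [add_nonneg hPl (mul_nonneg hEl h2)]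
-- derivatives
lemma hasDerivAt_gg {x : ℝ} (hx : 0 < x) : HasDerivAt gg (gd x) x := by
  have h := (em1_pos hx).ne'
  have hd : HasDerivAt (fun y : ℝ => exp y - 1) (exp x) x := (Real.hasDerivAt_exp x).sub_const 1
  have key := (hasDerivAt_id' (x := x)).div hd h
  rw [show gd x = (1 * (exp x - 1) - x * exp x) / (exp x - 1) ^ 2 from by
    unfold gd; ring]
  exact key

lemma hasDerivAt_mul_exp (x : ℝ) : HasDerivAt (fun y : ℝ => y * exp y) (exp x + x * exp x) x := by
  have key := (hasDerivAt_id' (x := x)).mul (Real.hasDerivAt_exp x)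
  rw [show exp x + x * exp x = 1 * exp x + x * exp x from by ring]
  exact key

lemma hasDerivAt_qq {x : ℝ} (hx : 0 < x) : HasDerivAt qq (qd x) x := by
  have h := (em1_pos hx).ne'
  have hd : HasDerivAt (fun y : ℝ => exp y - 1) (exp x) x := (Real.hasDerivAt_exp x).sub_const 1
  have key := (hasDerivAt_mul_exp x).div hd h
  rw [show qd x = ((exp x + x * exp x) * (exp x - 1) - x * exp x * exp x) / (exp x - 1) ^ 2 from by
    unfold qd; rw [div_eq_div_iff (pow_ne_zero 2 h) (pow_ne_zero 2 h)]; ring]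
  exact key

lemma hasDerivAt_gq {x : ℝ} (hx : 0 < x) : HasDerivAt gq (gqd x) x := by
  have h := (em1_pos hx).ne'
  have h2 : ((exp x - 1) ^ 2) ≠ 0 := pow_ne_zero 2 h
  have hn : HasDerivAt (fun y : ℝ => y ^ 2 * exp y) (2 * x * exp x + x ^ 2 * exp x) x := by
    have key := (hasDerivAt_pow 2 x).mul (Real.hasDerivAt_exp x)
    rw [show 2 * x * exp x + x ^ 2 * exp x = (2:ℕ) * x ^ (2 - 1) * exp x + x ^ 2 * exp x from by
      norm_num]
    exact key
  have hd : HasDerivAt (fun y : ℝ => (exp y - 1) ^ 2) ((2:ℕ) * (exp x - 1) ^ (2 - 1) * exp x) x :=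
    ((Real.hasDerivAt_exp x).sub_const 1).pow 2
  have key := hn.div hd h2
  rw [show gqd x = ((2 * x * exp x + x ^ 2 * exp x) * (exp x - 1) ^ 2
      - x ^ 2 * exp x * ((2:ℕ) * (exp x - 1) ^ (2 - 1) * exp x)) / ((exp x - 1) ^ 2) ^ 2 from by
    unfold gqd
    rw [div_eq_div_iff (pow_ne_zero 3 h) (pow_ne_zero 2 h2)]
    norm_num; ring]
  exact key

lemma hasDerivAt_G2 {x : ℝ} (hx : 0 < x) :
    HasDerivAt G2 (-(exp x * ((x - 1) * exp x ^ 2 + (-2 * x ^ 2 + 2 * x + 2) * exp x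
      - x ^ 2 - 3 * x - 1)) / (exp x - 1) ^ 4) x := by
  have h := (em1_pos hx).ne'
  have h3 : ((exp x - 1) ^ 3) ≠ 0 := pow_ne_zero 3 h
  have hn : HasDerivAt (fun y : ℝ => y * exp y * (exp y - 1 - y))
      ((exp x + x * exp x) * (exp x - 1 - x) + x * exp x * (exp x - 1)) x := by
    have h2 : HasDerivAt (fun y : ℝ => exp y - 1 - y) (exp x - 1) x := by
      have key := ((Real.hasDerivAt_exp x).sub_const 1).sub (hasDerivAt_id' (x := x))
      exact key
    exact (hasDerivAt_mul_exp x).mul h2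
  have hd : HasDerivAt (fun y : ℝ => (exp y - 1) ^ 3) ((3:ℕ) * (exp x - 1) ^ (3 - 1) * exp x) x :=
    ((Real.hasDerivAt_exp x).sub_const 1).pow 3
  have key := hn.div hd h3
  rw [show -(exp x * ((x - 1) * exp x ^ 2 + (-2 * x ^ 2 + 2 * x + 2) * exp x
        - x ^ 2 - 3 * x - 1)) / (exp x - 1) ^ 4
      = (((exp x + x * exp x) * (exp x - 1 - x) + x * exp x * (exp x - 1)) * (exp x - 1) ^ 3
        - x * exp x * (exp x - 1 - x) * ((3:ℕ) * (exp x - 1) ^ (3 - 1) * exp x)) / ((exp x - 1) ^ 3) ^ 2 from by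
    rw [div_eq_div_iff (pow_ne_zero 4 h) (pow_ne_zero 2 h3)]
    norm_num; ring]
  exact key
lemma gg_anti : AntitoneOn gg (Ioi (0:ℝ)) := by
  apply antitoneOn_of_deriv_nonpos (convex_Ioi 0)
  · exact fun x hx => (hasDerivAt_gg hx).continuousAt.continuousWithinAt
  · intro x hx; rw [interior_Ioi] at hx
    exact (hasDerivAt_gg hx).differentiableAt.differentiableWithinAt
  · intro x hx; rw [interior_Ioi] at hx
    rw [(hasDerivAt_gg hx).deriv]
    exact gd_nonpos hx

lemma qq_mono : MonotoneOn qq (Ioi (0:ℝ)) := by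
  apply monotoneOn_of_deriv_nonneg (convex_Ioi 0)
  · exact fun x hx => (hasDerivAt_qq hx).continuousAt.continuousWithinAt
  · intro x hx; rw [interior_Ioi] at hx
    exact (hasDerivAt_qq hx).differentiableAt.differentiableWithinAt
  · intro x hx; rw [interior_Ioi] at hx
    rw [(hasDerivAt_qq hx).deriv]
    exact qd_nonneg hx

lemma G2_anti : AntitoneOn G2 (Ioi (0:ℝ)) := by
  apply antitoneOn_of_deriv_nonpos (convex_Ioi 0)
  · exact fun x hx => (hasDerivAt_G2 hx).continuousAt.continuousWithinAt
  · intro x hx; rw [interior_Ioi] at hx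
    exact (hasDerivAt_G2 hx).differentiableAt.differentiableWithinAt
  · intro x hx; rw [interior_Ioi] at hx
    rw [(hasDerivAt_G2 hx).deriv]
    apply div_nonpos_of_nonpos_of_nonneg
    · simp only [neg_nonpos]
      exact mul_nonneg (exp_pos x).le (P_nonneg hx.le)
    · positivity
lemma L2_num {a b : ℝ} (hb : 0 < b) (hba : b ≤ a) :
    (gqd a - gqd b) * (gg a + gg b) - (gq a + gq b) * (gd a - gd b) ≤ 0 := by
  have ha : 0 < a := lt_of_lt_of_le hb hba
  have hea := (em1_pos ha).ne'
  have heb := (em1_pos hb).ne'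
  have hid : (gqd a - gqd b) * (gg a + gg b) - (gq a + gq b) * (gd a - gd b)
      = (gg a + gg b) * (G2 a - G2 b) + (qq a - qq b) * (gd a * gg b + gd b * gg a) := by
    unfold gqd gg gq gd G2 qq
    field_simp
    ring
  rw [hid]
  have hG2 : G2 a ≤ G2 b := G2_anti (mem_Ioi.2 hb) (mem_Ioi.2 ha) hba
  have hqq : qq b ≤ qq a := qq_mono (mem_Ioi.2 hb) (mem_Ioi.2 ha) hba
  have hH : 0 < gg a + gg b := add_pos (gg_pos ha) (gg_pos hb)
  have hgd : gd a * gg b + gd b * gg a ≤ 0 := by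
    have := mul_nonpos_of_nonpos_of_nonneg (gd_nonpos ha) (gg_pos hb).le
    have := mul_nonpos_of_nonpos_of_nonneg (gd_nonpos hb) (gg_pos ha).le
    linarith
  have t1 : (gg a + gg b) * (G2 a - G2 b) ≤ 0 :=
    mul_nonpos_of_nonneg_of_nonpos hH.le (by linarith)
  have t2 : (qq a - qq b) * (gd a * gg b + gd b * gg a) ≤ 0 :=
    mul_nonpos_of_nonneg_of_nonpos (by linarith) hgd
  linarith

lemma Phi_anti {S : ℝ} (hS : 0 < S) :
    AntitoneOn (fun p => (gq p + gq (S - p)) / (gg p + gg (S - p))) (Ico (S/2) S) := by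
  have hderiv : ∀ p ∈ Ioo (S/2) S,
      HasDerivAt (fun p => (gq p + gq (S - p)) / (gg p + gg (S - p)))
        (((gqd p + gqd (S - p) * (-1)) * (gg p + gg (S - p))
          - (gq p + gq (S - p)) * (gd p + gd (S - p) * (-1))) / (gg p + gg (S - p)) ^ 2) p := by
    intro p hp
    have hp0 : 0 < p := lt_of_le_of_lt (by linarith : (0:ℝ) ≤ S/2) hp.1
    have hb0 : 0 < S - p := by have := hp.2; linarith
    have hin : HasDerivAt (fun p : ℝ => S - p) (-1) p := by
      simpa using (hasDerivAt_id' (x := p)).const_sub S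
    have hG : HasDerivAt (fun p => gq p + gq (S - p)) (gqd p + gqd (S - p) * (-1)) p :=
      (hasDerivAt_gq hp0).add ((hasDerivAt_gq hb0).comp p hin)
    have hH : HasDerivAt (fun p => gg p + gg (S - p)) (gd p + gd (S - p) * (-1)) p :=
      (hasDerivAt_gg hp0).add ((hasDerivAt_gg hb0).comp p hin)
    exact hG.div hH (add_pos (gg_pos hp0) (gg_pos hb0)).ne'
  apply antitoneOn_of_deriv_nonpos (convex_Ico _ _)
  · intro p hp
    rcases eq_or_lt_of_le hp.1 with h | h
    · -- continuity at left endpoint: use ContinuousAt directly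
      have hp0 : 0 < p := by have := hp.2; nlinarith [hp.1, hS]
      have hb0 : 0 < S - p := by have := hp.2; linarith
      have hcG : ContinuousAt (fun p => gq p + gq (S - p)) p := by
        have h1 := (hasDerivAt_gq hp0).continuousAt
        have h2 : ContinuousAt (fun p : ℝ => gq (S - p)) p :=
          (hasDerivAt_gq hb0).continuousAt.comp (by fun_prop)
        exact h1.add h2
      have hcH : ContinuousAt (fun p => gg p + gg (S - p)) p := by
        have h1 := (hasDerivAt_gg hp0).continuousAt
        have h2 : ContinuousAt (fun p : ℝ => gg (S - p)) p :=
          (hasDerivAt_gg hb0).continuousAt.comp (by fun_prop)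
        exact h1.add h2
      exact (hcG.div hcH (add_pos (gg_pos hp0) (gg_pos hb0)).ne').continuousWithinAt
    · have hp0 : 0 < p := lt_of_le_of_lt (by linarith : (0:ℝ) ≤ S/2) h
      have hb0 : 0 < S - p := by have := hp.2; linarith
      exact ((hderiv p ⟨h, hp.2⟩).continuousAt).continuousWithinAt
  · intro p hp; rw [interior_Ico] at hp
    exact (hderiv p hp).differentiableAt.differentiableWithinAt
  · intro p hp; rw [interior_Ico] at hp
    rw [(hderiv p hp).deriv]
    apply div_nonpos_of_nonpos_of_nonneg _ (by positivity)
    have hp0 : 0 < p := lt_of_le_of_lt (by linarith : (0:ℝ) ≤ S/2) hp.1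
    have hb0 : 0 < S - p := by have := hp.2; linarith
    have hba : S - p ≤ p := by have := hp.1; linarith
    have := L2_num hb0 hba
    linarith

lemma L1 {a b b' : ℝ} (hb : 0 < b) (hbb : b ≤ b') (hba : b' ≤ a) :
    (gq a + gq b) * (gg a + gg b') ≤ (gq a + gq b') * (gg a + gg b) := by
  have hb' : 0 < b' := lt_of_lt_of_le hb hbb
  have ha : 0 < a := lt_of_lt_of_le hb' hba
  rw [gq_eq ha, gq_eq hb, gq_eq hb']
  have e1 : gg b' ≤ gg b := gg_anti (mem_Ioi.2 hb) (mem_Ioi.2 hb') hbb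
  have m1 : qq b ≤ qq b' := qq_mono (mem_Ioi.2 hb) (mem_Ioi.2 hb') hbb
  have m2 : qq b' ≤ qq a := qq_mono (mem_Ioi.2 hb') (mem_Ioi.2 ha) hba
  have t1 : 0 ≤ gg a * ((gg b - gg b') * (qq a - qq b)) :=
    mul_nonneg (gg_pos ha).le (mul_nonneg (by linarith) (by linarith))
  have t2 : 0 ≤ gg a * (gg b' * (qq b' - qq b)) :=
    mul_nonneg (gg_pos ha).le (mul_nonneg (gg_pos hb').le (by linarith))
  have t3 : 0 ≤ gg b * (gg b' * (qq b' - qq b)) :=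
    mul_nonneg (gg_pos hb).le (mul_nonneg (gg_pos hb').le (by linarith))
  nlinarith [t1, t2, t3]

lemma lemD {x₁ x₂ y₁ y₂ : ℝ} (h2 : 0 < x₂) (h21 : x₂ ≤ y₂) (hy : y₂ ≤ y₁) (h1 : y₁ ≤ x₁)
    (hsum : x₁ + x₂ ≤ y₁ + y₂) :
    (gq x₁ + gq x₂) * (gg y₁ + gg y₂) ≤ (gq y₁ + gq y₂) * (gg x₁ + gg x₂) := by
  have hy2 : 0 < y₂ := lt_of_lt_of_le h2 h21
  have hy1 : 0 < y₁ := lt_of_lt_of_le hy2 hy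
  have hx1 : 0 < x₁ := lt_of_lt_of_le hy1 h1
  set b' : ℝ := y₁ + y₂ - x₁ with hb'
  have hb'0 : 0 < b' := by rw [hb']; linarith
  have hx2b' : x₂ ≤ b' := by rw [hb']; linarith
  have hb'y2 : b' ≤ y₂ := by rw [hb']; linarith
  have hb'x1 : b' ≤ x₁ := by linarith
  -- Step 1
  have step1 : (gq x₁ + gq x₂) * (gg x₁ + gg b') ≤ (gq x₁ + gq b') * (gg x₁ + gg x₂) :=
    L1 h2 hx2b' hb'x1
  -- Step 2 via Phi_anti with S = y₁ + y₂
  have hS : 0 < y₁ + y₂ := by linarith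
  have hmem1 : y₁ ∈ Ico ((y₁ + y₂)/2) (y₁ + y₂) := ⟨by linarith, by linarith⟩
  have hmem2 : x₁ ∈ Ico ((y₁ + y₂)/2) (y₁ + y₂) := ⟨by linarith, by linarith⟩
  have step2 := Phi_anti hS hmem1 hmem2 h1
  dsimp only at step2
  rw [show y₁ + y₂ - x₁ = b' from rfl] at step2
  rw [show y₁ + y₂ - y₁ = y₂ from by ring] at step2
  -- combine
  have d1 : 0 < gg x₁ + gg x₂ := add_pos (gg_pos hx1) (gg_pos h2)
  have d2 : 0 < gg x₁ + gg b' := add_pos (gg_pos hx1) (gg_pos hb'0)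
  have d3 : 0 < gg y₁ + gg y₂ := add_pos (gg_pos hy1) (gg_pos hy2)
  rw [div_le_div_iff₀ d2 d3] at step2
  calc (gq x₁ + gq x₂) * (gg y₁ + gg y₂)
      ≤ ((gq x₁ + gq b') * (gg x₁ + gg x₂)) * (gg y₁ + gg y₂) / (gg x₁ + gg b') := by
        rw [le_div_iff₀ d2]
        calc (gq x₁ + gq x₂) * (gg y₁ + gg y₂) * (gg x₁ + gg b')
            = ((gq x₁ + gq x₂) * (gg x₁ + gg b')) * (gg y₁ + gg y₂) := by ring
          _ ≤ ((gq x₁ + gq b') * (gg x₁ + gg x₂)) * (gg y₁ + gg y₂) :=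
              mul_le_mul_of_nonneg_right step1 d3.le
    _ ≤ (gq y₁ + gq y₂) * (gg x₁ + gg x₂) := by
        rw [div_le_iff₀ d2]
        calc (gq x₁ + gq b') * (gg x₁ + gg x₂) * (gg y₁ + gg y₂)
            = ((gq x₁ + gq b') * (gg y₁ + gg y₂)) * (gg x₁ + gg x₂) := by ring
          _ ≤ ((gq y₁ + gq y₂) * (gg x₁ + gg b')) * (gg x₁ + gg x₂) :=
              mul_le_mul_of_nonneg_right step2 d1.le
          _ = (gq y₁ + gq y₂) * (gg x₁ + gg x₂) * (gg x₁ + gg b') := by ring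
lemma rpow_schur {α a b c d : ℝ} (hα : 0 < α) (hα1 : α ≤ 1) (hd : 0 < d) (hdb : d ≤ b)
    (hba : b ≤ a) (hac : a ≤ c) (hsum : a + b = c + d) :
    c ^ α + d ^ α ≤ a ^ α + b ^ α := by
  set δ := c - a with hδ
  have hδ0 : 0 ≤ δ := by rw [hδ]; linarith
  have hb' : b = d + δ := by rw [hδ]; linarith
  have hc' : c = a + δ := by rw [hδ]; ring
  have hD : ∀ z : ℝ, 0 < z → HasDerivAt (fun z : ℝ => (z + δ) ^ α - z ^ α)
      (α * (z + δ) ^ (α - 1) * 1 - α * z ^ (α - 1)) z := by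
    intro z hz
    have hzδ : 0 < z + δ := by linarith
    have h1 : HasDerivAt (fun z : ℝ => z + δ) 1 z := (hasDerivAt_id' (x := z)).add_const δ
    have h2 : HasDerivAt (fun y : ℝ => y ^ α) (α * (z + δ) ^ (α - 1)) (z + δ) :=
      Real.hasDerivAt_rpow_const (Or.inl hzδ.ne')
    have h3 : HasDerivAt (fun y : ℝ => y ^ α) (α * z ^ (α - 1)) z :=
      Real.hasDerivAt_rpow_const (Or.inl hz.ne')
    exact (h2.comp z h1).sub h3
  have anti : AntitoneOn (fun z : ℝ => (z + δ) ^ α - z ^ α) (Ici d) := by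
    apply antitoneOn_of_deriv_nonpos (convex_Ici d)
    · intro z hz
      have hz0 : 0 < z := lt_of_lt_of_le hd hz
      exact (hD z hz0).continuousAt.continuousWithinAt
    · intro z hz; rw [interior_Ici] at hz
      exact (hD z (lt_trans hd hz)).differentiableAt.differentiableWithinAt
    · intro z hz; rw [interior_Ici] at hz
      have hz0 : 0 < z := lt_trans hd hz
      rw [(hD z hz0).deriv]
      have : (z + δ) ^ (α - 1) ≤ z ^ (α - 1) :=
        Real.rpow_le_rpow_of_nonpos hz0 (by linarith) (by linarith)
      nlinarith [mul_le_mul_of_nonneg_left this hα.le]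
  have key := anti (self_mem_Ici) (mem_Ici.2 (le_trans hdb hba)) (le_trans hdb hba)
  dsimp only at key
  rw [hc', hb']
  linarith

lemma hasDerivAt_term {α c t : ℝ} (hα : 0 < α) (hc : 0 < c) (ht : 0 < t) :
    HasDerivAt (fun t : ℝ => gg ((c * t) ^ α)) (gd ((c * t) ^ α) * (α * (c * t) ^ α / t)) t := by
  have hct : 0 < c * t := mul_pos hc ht
  have h1 : HasDerivAt (fun t : ℝ => c * t) c t := by
    simpa using (hasDerivAt_id' (x := t)).const_mul c
  have h2 : HasDerivAt (fun y : ℝ => y ^ α) (α * (c * t) ^ (α - 1)) (c * t) :=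
    Real.hasDerivAt_rpow_const (Or.inl hct.ne')
  have h3 := h2.comp t h1
  have hX : 0 < (c * t) ^ α := rpow_pos_of_pos hct α
  have h4 := (hasDerivAt_gg hX).comp t h3
  have hval : gd ((c * t) ^ α) * (α * (c * t) ^ α / t) = gd ((c * t) ^ α) * (α * (c * t) ^ (α - 1) * c) := by
    rw [Real.rpow_sub hct, Real.rpow_one]
    field_simp
  rw [hval]
  exact h4

theorem main_aux (α lam₁ lam₂ θ₁ θ₂ : ℝ) (hα : 0 < α) (hα1 : α ≤ 1)
    (hlam₁ : 0 < lam₁) (hlam₂ : 0 < lam₂) (hθ₁ : 0 < θ₁) (hθ₂ : 0 < θ₂)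
    (hord1 : lam₂ ≤ lam₁) (hord2 : θ₂ ≤ θ₁) (hsum : lam₁ + lam₂ = θ₁ + θ₂) (hm : lam₁ ≤ θ₁) :
    MonotoneOn
      (fun t : ℝ =>
        ((θ₁ * t) ^ α / (exp ((θ₁ * t) ^ α) - 1) +
            (θ₂ * t) ^ α / (exp ((θ₂ * t) ^ α) - 1)) /
          ((lam₁ * t) ^ α / (exp ((lam₁ * t) ^ α) - 1) +
            (lam₂ * t) ^ α / (exp ((lam₂ * t) ^ α) - 1)))
      (Ioi (0 : ℝ)) := by
  have hθ₂lam : θ₂ ≤ lam₂ := by linarith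
  have hfun : (fun t : ℝ =>
        ((θ₁ * t) ^ α / (exp ((θ₁ * t) ^ α) - 1) +
            (θ₂ * t) ^ α / (exp ((θ₂ * t) ^ α) - 1)) /
          ((lam₁ * t) ^ α / (exp ((lam₁ * t) ^ α) - 1) +
            (lam₂ * t) ^ α / (exp ((lam₂ * t) ^ α) - 1)))
      = (fun t : ℝ => (gg ((θ₁ * t) ^ α) + gg ((θ₂ * t) ^ α)) /
          (gg ((lam₁ * t) ^ α) + gg ((lam₂ * t) ^ α))) := rfl
  rw [hfun]
  have hFat : ∀ t : ℝ, 0 < t → HasDerivAt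
      (fun t : ℝ => (gg ((θ₁ * t) ^ α) + gg ((θ₂ * t) ^ α)) /
          (gg ((lam₁ * t) ^ α) + gg ((lam₂ * t) ^ α)))
      (((gd ((θ₁ * t) ^ α) * (α * (θ₁ * t) ^ α / t) + gd ((θ₂ * t) ^ α) * (α * (θ₂ * t) ^ α / t))
          * (gg ((lam₁ * t) ^ α) + gg ((lam₂ * t) ^ α))
        - (gg ((θ₁ * t) ^ α) + gg ((θ₂ * t) ^ α))
          * (gd ((lam₁ * t) ^ α) * (α * (lam₁ * t) ^ α / t) + gd ((lam₂ * t) ^ α) * (α * (lam₂ * t) ^ α / t)))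
        / (gg ((lam₁ * t) ^ α) + gg ((lam₂ * t) ^ α)) ^ 2) t := by
    intro t ht
    have hN := (hasDerivAt_term hα hθ₁ ht).add (hasDerivAt_term hα hθ₂ ht)
    have hDd := (hasDerivAt_term hα hlam₁ ht).add (hasDerivAt_term hα hlam₂ ht)
    have hDpos : 0 < gg ((lam₁ * t) ^ α) + gg ((lam₂ * t) ^ α) :=
      add_pos (gg_pos (rpow_pos_of_pos (mul_pos hlam₁ ht) α))
        (gg_pos (rpow_pos_of_pos (mul_pos hlam₂ ht) α))
    exact hN.div hDd hDpos.ne'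
  apply monotoneOn_of_deriv_nonneg (convex_Ioi 0)
  · exact fun t ht => (hFat t ht).continuousAt.continuousWithinAt
  · intro t ht; rw [interior_Ioi] at ht
    exact (hFat t ht).differentiableAt.differentiableWithinAt
  · intro t ht; rw [interior_Ioi] at ht
    rw [(hFat t ht).deriv]
    apply div_nonneg _ (sq_nonneg _)
    have hx₁ : 0 < (θ₁ * t) ^ α := rpow_pos_of_pos (mul_pos hθ₁ ht) α
    have hx₂ : 0 < (θ₂ * t) ^ α := rpow_pos_of_pos (mul_pos hθ₂ ht) α
    have hy₁ : 0 < (lam₁ * t) ^ α := rpow_pos_of_pos (mul_pos hlam₁ ht) α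
    have hy₂ : 0 < (lam₂ * t) ^ α := rpow_pos_of_pos (mul_pos hlam₂ ht) α
    have h21 : (θ₂ * t) ^ α ≤ (lam₂ * t) ^ α :=
      Real.rpow_le_rpow (mul_pos hθ₂ ht).le (mul_le_mul_of_nonneg_right hθ₂lam ht.le) hα.le
    have hyy : (lam₂ * t) ^ α ≤ (lam₁ * t) ^ α :=
      Real.rpow_le_rpow (mul_pos hlam₂ ht).le (mul_le_mul_of_nonneg_right hord1 ht.le) hα.le
    have h1 : (lam₁ * t) ^ α ≤ (θ₁ * t) ^ α :=
      Real.rpow_le_rpow (mul_pos hlam₁ ht).le (mul_le_mul_of_nonneg_right hm ht.le) hα.le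
    have hsum' : (θ₁ * t) ^ α + (θ₂ * t) ^ α ≤ (lam₁ * t) ^ α + (lam₂ * t) ^ α := by
      apply rpow_schur hα hα1 (mul_pos hθ₂ ht)
        (mul_le_mul_of_nonneg_right hθ₂lam ht.le)
        (mul_le_mul_of_nonneg_right hord1 ht.le)
        (mul_le_mul_of_nonneg_right hm ht.le)
      rw [← add_mul, ← add_mul, hsum]
    have hkey := lemD hx₂ h21 hyy h1 hsum'
    have e1 := x_gd_eq hx₁
    have e2 := x_gd_eq hx₂
    have e3 := x_gd_eq hy₁
    have e4 := x_gd_eq hy₂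
    have hnum : (gd ((θ₁ * t) ^ α) * (α * (θ₁ * t) ^ α / t) + gd ((θ₂ * t) ^ α) * (α * (θ₂ * t) ^ α / t))
          * (gg ((lam₁ * t) ^ α) + gg ((lam₂ * t) ^ α))
        - (gg ((θ₁ * t) ^ α) + gg ((θ₂ * t) ^ α))
          * (gd ((lam₁ * t) ^ α) * (α * (lam₁ * t) ^ α / t) + gd ((lam₂ * t) ^ α) * (α * (lam₂ * t) ^ α / t))
        = (α / t) * ((gq ((lam₁ * t) ^ α) + gq ((lam₂ * t) ^ α)) * (gg ((θ₁ * t) ^ α) + gg ((θ₂ * t) ^ α))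
          - (gq ((θ₁ * t) ^ α) + gq ((θ₂ * t) ^ α)) * (gg ((lam₁ * t) ^ α) + gg ((lam₂ * t) ^ α))) := by
      have ht' : t ≠ 0 := ht.ne'
      linear_combination (α / t * (gg ((lam₁ * t) ^ α) + gg ((lam₂ * t) ^ α))) * e1
        + (α / t * (gg ((lam₁ * t) ^ α) + gg ((lam₂ * t) ^ α))) * e2
        - (α / t * (gg ((θ₁ * t) ^ α) + gg ((θ₂ * t) ^ α))) * e3
        - (α / t * (gg ((θ₁ * t) ^ α) + gg ((θ₂ * t) ^ α))) * e4
    rw [hnum]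
    apply mul_nonneg (div_nonneg hα.le ht.le)
    linarith
/-- For `0 < α ≤ 1`, if `(λ₁, λ₂) ≼^m (θ₁, θ₂)` (i.e. `λ₁ + λ₂ = θ₁ + θ₂` and
`max(λ₁,λ₂) ≤ max(θ₁,θ₂)`), then the ratio of reverse hazard rates
`r_{2:2}^θ(t) / r_{2:2}^λ(t) = [u(θ₁ t) + u(θ₂ t)] / [u(λ₁ t) + u(λ₂ t)]`, with
`u(s) = s^α / (e^{s^α} − 1)`, is increasing in `t` on `(0, ∞)`. -/
theorem parallel_weibull_rhr_ratio_monotone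
    (α lam₁ lam₂ θ₁ θ₂ : ℝ) (hα : 0 < α) (hα1 : α ≤ 1)
    (hlam₁ : 0 < lam₁) (hlam₂ : 0 < lam₂) (hθ₁ : 0 < θ₁) (hθ₂ : 0 < θ₂)
    (hsum : lam₁ + lam₂ = θ₁ + θ₂) (hmax : max lam₁ lam₂ ≤ max θ₁ θ₂) :
    MonotoneOn
      (fun t : ℝ =>
        ((θ₁ * t) ^ α / (exp ((θ₁ * t) ^ α) - 1) +
            (θ₂ * t) ^ α / (exp ((θ₂ * t) ^ α) - 1)) /
          ((lam₁ * t) ^ α / (exp ((lam₁ * t) ^ α) - 1) +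
            (lam₂ * t) ^ α / (exp ((lam₂ * t) ^ α) - 1)))
      (Ioi (0 : ℝ)) := by
  rcases le_total lam₂ lam₁ with hl | hl <;> rcases le_total θ₂ θ₁ with hth | hth
  · have hm : lam₁ ≤ θ₁ := by
      rw [max_eq_left hl, max_eq_left hth] at hmax; exact hmax
    exact main_aux α lam₁ lam₂ θ₁ θ₂ hα hα1 hlam₁ hlam₂ hθ₁ hθ₂ hl hth hsum hm
  · have hm : lam₁ ≤ θ₂ := by
      rw [max_eq_left hl, max_eq_right hth] at hmax; exact hmax
    have h := main_aux α lam₁ lam₂ θ₂ θ₁ hα hα1 hlam₁ hlam₂ hθ₂ hθ₁ hl hth (by linarith) hm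
    have e : (fun t : ℝ =>
        ((θ₂ * t) ^ α / (exp ((θ₂ * t) ^ α) - 1) + (θ₁ * t) ^ α / (exp ((θ₁ * t) ^ α) - 1)) /
          ((lam₁ * t) ^ α / (exp ((lam₁ * t) ^ α) - 1) + (lam₂ * t) ^ α / (exp ((lam₂ * t) ^ α) - 1)))
        = (fun t : ℝ =>
        ((θ₁ * t) ^ α / (exp ((θ₁ * t) ^ α) - 1) + (θ₂ * t) ^ α / (exp ((θ₂ * t) ^ α) - 1)) /
          ((lam₁ * t) ^ α / (exp ((lam₁ * t) ^ α) - 1) + (lam₂ * t) ^ α / (exp ((lam₂ * t) ^ α) - 1))) := by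
      funext t; ring
    rw [e] at h; exact h
  · have hm : lam₂ ≤ θ₁ := by
      rw [max_eq_right hl, max_eq_left hth] at hmax; exact hmax
    have h := main_aux α lam₂ lam₁ θ₁ θ₂ hα hα1 hlam₂ hlam₁ hθ₁ hθ₂ hl hth (by linarith) hm
    have e : (fun t : ℝ =>
        ((θ₁ * t) ^ α / (exp ((θ₁ * t) ^ α) - 1) + (θ₂ * t) ^ α / (exp ((θ₂ * t) ^ α) - 1)) /
          ((lam₂ * t) ^ α / (exp ((lam₂ * t) ^ α) - 1) + (lam₁ * t) ^ α / (exp ((lam₁ * t) ^ α) - 1)))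
        = (fun t : ℝ =>
        ((θ₁ * t) ^ α / (exp ((θ₁ * t) ^ α) - 1) + (θ₂ * t) ^ α / (exp ((θ₂ * t) ^ α) - 1)) /
          ((lam₁ * t) ^ α / (exp ((lam₁ * t) ^ α) - 1) + (lam₂ * t) ^ α / (exp ((lam₂ * t) ^ α) - 1))) := by
      funext t; ring
    rw [e] at h; exact h
  · have hm : lam₂ ≤ θ₂ := by
      rw [max_eq_right hl, max_eq_right hth] at hmax; exact hmax
    have h := main_aux α lam₂ lam₁ θ₂ θ₁ hα hα1 hlam₂ hlam₁ hθ₂ hθ₁ hl hth (by linarith) hm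
    have e : (fun t : ℝ =>
        ((θ₂ * t) ^ α / (exp ((θ₂ * t) ^ α) - 1) + (θ₁ * t) ^ α / (exp ((θ₁ * t) ^ α) - 1)) /
          ((lam₂ * t) ^ α / (exp ((lam₂ * t) ^ α) - 1) + (lam₁ * t) ^ α / (exp ((lam₁ * t) ^ α) - 1)))
        = (fun t : ℝ =>
        ((θ₁ * t) ^ α / (exp ((θ₁ * t) ^ α) - 1) + (θ₂ * t) ^ α / (exp ((θ₂ * t) ^ α) - 1)) /
          ((lam₁ * t) ^ α / (exp ((lam₁ * t) ^ α) - 1) + (lam₂ * t) ^ α / (exp ((lam₂ * t) ^ α) - 1))) := by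
      funext t; ring
    rw [e] at h; exact h
end

section
/- Fix a real α > 0 and positive reals λ, λ₁, λ₁* such that λ₁* = min(λ, λ₁, λ₁*) and (λ₁, λ) is weakly majorized by (λ₁*, λ) (so that either λ₁* ≤ λ ≤ λ₁ or λ₁* ≤ λ₁ ≤ λ). Then the lifetime of the parallel system of two independent Weibull components with scale parameters (λ₁, λ) is smaller in the likelihood ratio order than that with scale parameters (λ₁*, λ); that is, the ratio of densities f_{2:2}*(t) / f_{2:2}(t) is increasing in t on (0, ∞). -/
open Real Set

/-- The slope of the chord of `exp` from `0`: `(e^x - 1)/x` is increasing. -/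
lemma weibull_aux_slope_exp {s t : ℝ} (hs : 0 < s) (hst : s ≤ t) :
    t * (exp s - 1) ≤ s * (exp t - 1) := by
  have ht : 0 < t := hs.trans_le hst
  have hab : (1 - s / t) + s / t = 1 := by ring
  have h := convexOn_exp.2 (mem_univ (0:ℝ)) (mem_univ t)
    (sub_nonneg.2 ((div_le_one ht).2 hst)) (by positivity) hab
  simp only [smul_eq_mul, mul_zero, zero_add, exp_zero, mul_one] at h
  rw [div_mul_cancel₀ s (ne_of_gt ht)] at h
  have h5 := mul_le_mul_of_nonneg_left h ht.le
  have e : t * (1 - s / t + s / t * exp t) = t - s + s * exp t := by field_simp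
  rw [e] at h5
  nlinarith [h5]

/-- `x e^x/(e^x - 1) = x/(1 - e^{-x})` is increasing (in cleared form). -/
lemma weibull_aux_slope_exp2 {s t : ℝ} (hs : 0 < s) (hst : s ≤ t) :
    s * exp s * (exp t - 1) ≤ t * exp t * (exp s - 1) := by
  have ht : 0 < t := hs.trans_le hst
  have hab : (1 - s / t) + s / t = 1 := by ring
  have h := convexOn_exp.2 (mem_univ (0:ℝ)) (mem_univ (-t))
    (sub_nonneg.2 ((div_le_one ht).2 hst)) (by positivity) hab
  simp only [smul_eq_mul, mul_zero, zero_add, exp_zero, mul_one, mul_neg] at h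
  rw [div_mul_cancel₀ s (ne_of_gt ht)] at h
  have h5 := mul_le_mul_of_nonneg_left h ht.le
  have e : t * (1 - s / t + s / t * exp (-t)) = t - s + s * exp (-t) := by field_simp
  rw [e] at h5
  have key : t * exp t * (exp s - 1) - s * exp s * (exp t - 1)
      = exp s * exp t * ((t - s + s * exp (-t)) - t * exp (-s)) := by
    rw [exp_neg, exp_neg]
    field_simp
    ring
  nlinarith [key, h5, mul_pos (exp_pos s) (exp_pos t)]

noncomputable def uu (s : ℝ) : ℝ := s / (exp s - 1)

lemma weibull_aux_exp_sub_one_pos {s : ℝ} (hs : 0 < s) : 0 < exp s - 1 := by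
  nlinarith [add_one_le_exp s]

lemma weibull_aux_one_sub_exp_neg_pos {s : ℝ} (hs : 0 < s) : 0 < 1 - exp (-s) := by
  have hm : exp (-s) * exp s = 1 := by rw [← exp_add]; simp
  nlinarith [weibull_aux_exp_sub_one_pos hs, exp_pos (-s)]

lemma uu_pos {s : ℝ} (hs : 0 < s) : 0 < uu s :=
  div_pos hs (weibull_aux_exp_sub_one_pos hs)

lemma uu_anti {s t : ℝ} (hs : 0 < s) (hst : s ≤ t) : uu t ≤ uu s := by
  have ht : 0 < t := hs.trans_le hst
  rw [uu, uu, div_le_div_iff₀ (weibull_aux_exp_sub_one_pos ht)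
    (weibull_aux_exp_sub_one_pos hs)]
  exact weibull_aux_slope_exp hs hst

lemma uu_phi {s t : ℝ} (hs : 0 < s) (hst : s ≤ t) : s + uu s ≤ t + uu t := by
  have ht : 0 < t := hs.trans_le hst
  have e1 : ∀ r : ℝ, 0 < r → r + uu r = r * exp r / (exp r - 1) := by
    intro r hr
    rw [uu, eq_div_iff (weibull_aux_exp_sub_one_pos hr).ne']
    field_simp [(weibull_aux_exp_sub_one_pos hr).ne']
    ring
  rw [e1 s hs, e1 t ht, div_le_div_iff₀ (weibull_aux_exp_sub_one_pos hs)
    (weibull_aux_exp_sub_one_pos ht)]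
  exact weibull_aux_slope_exp2 hs hst

lemma uu_hasDerivAt {s : ℝ} (hs : 0 < s) :
    HasDerivAt uu ((exp s - 1 - s * exp s) / (exp s - 1) ^ 2) s := by
  have h := (hasDerivAt_id s).div ((Real.hasDerivAt_exp s).sub_const 1)
    (ne_of_gt (weibull_aux_exp_sub_one_pos hs))
  refine h.congr_deriv ?_
  simp only [id_eq]
  ring

lemma uu_id {s : ℝ} (hs : 0 < s) :
    s * ((exp s - 1 - s * exp s) / (exp s - 1) ^ 2) = uu s * (1 - s - uu s) := by
  rw [uu]
  field_simp [(weibull_aux_exp_sub_one_pos hs).ne']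
  ring

/-- The purely algebraic heart of the monotonicity of the ratio of the
`u`-sums. -/
lemma weibull_aux_keyB {P Q R uP uQ uR : ℝ} (huQ : 0 ≤ uQ) (huR : 0 ≤ uR)
    (hPQu : uQ ≤ uP) (h1 : P + uP ≤ Q + uQ) (h2 : P + uP ≤ R + uR) :
    0 ≤ (uP * (1 - P - uP) + uR * (1 - R - uR)) * (uQ + uR)
        - (uP + uR) * (uQ * (1 - Q - uQ) + uR * (1 - R - uR)) := by
  have hid : (uP * (1 - P - uP) + uR * (1 - R - uR)) * (uQ + uR)
        - (uP + uR) * (uQ * (1 - Q - uQ) + uR * (1 - R - uR))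
      = uP * uQ * ((Q + uQ) - (P + uP))
        + uR * (((R + uR) - (P + uP)) * (uP - uQ))
        + uR * (((Q + uQ) - (P + uP)) * uQ) := by ring
  rw [hid]
  have t1 : 0 ≤ uP * uQ * ((Q + uQ) - (P + uP)) :=
    mul_nonneg (mul_nonneg (huQ.trans hPQu) huQ) (by linarith)
  have t2 : 0 ≤ uR * (((R + uR) - (P + uP)) * (uP - uQ)) :=
    mul_nonneg huR (mul_nonneg (by linarith) (by linarith))
  have t3 : 0 ≤ uR * (((Q + uQ) - (P + uP)) * uQ) :=
    mul_nonneg huR (mul_nonneg (by linarith) huQ)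
  linarith

/-- The ratio of the distribution functions is increasing. -/
lemma weibull_aux_lemA {c₁ c₂ : ℝ} (hc₁ : 0 < c₁) (h12 : c₁ ≤ c₂) :
    MonotoneOn (fun x : ℝ => (1 - exp (-(c₁ * x))) / (1 - exp (-(c₂ * x)))) (Ioi 0) := by
  have hc₂ : 0 < c₂ := hc₁.trans_le h12
  have hnum : ∀ x : ℝ, HasDerivAt (fun x : ℝ => 1 - exp (-(c₁ * x)))
      (c₁ * exp (-(c₁ * x))) x := by
    intro x
    have h := (((hasDerivAt_id x).const_mul c₁).neg.exp).const_sub 1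
    refine h.congr_deriv ?_
    simp only [id_eq, Pi.neg_apply]
    ring
  have hden : ∀ x : ℝ, HasDerivAt (fun x : ℝ => 1 - exp (-(c₂ * x)))
      (c₂ * exp (-(c₂ * x))) x := by
    intro x
    have h := (((hasDerivAt_id x).const_mul c₂).neg.exp).const_sub 1
    refine h.congr_deriv ?_
    simp only [id_eq, Pi.neg_apply]
    ring
  apply monotoneOn_of_deriv_nonneg (convex_Ioi 0)
  · apply ContinuousOn.div (by fun_prop) (by fun_prop)
    intro x hx
    exact (weibull_aux_one_sub_exp_neg_pos (mul_pos hc₂ hx)).ne'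
  · rw [interior_Ioi]
    intro x hx
    exact (((hnum x).div (hden x)
      (weibull_aux_one_sub_exp_neg_pos
        (mul_pos hc₂ hx)).ne')).differentiableAt.differentiableWithinAt
  · intro x hx
    rw [interior_Ioi] at hx
    have hx0 : (0 : ℝ) < x := hx
    have hq := (hnum x).div (hden x)
      (weibull_aux_one_sub_exp_neg_pos (mul_pos hc₂ hx0)).ne'
    rw [show deriv (fun x : ℝ => (1 - exp (-(c₁ * x))) / (1 - exp (-(c₂ * x)))) x = _ from hq.deriv]
    apply div_nonneg _ (by positivity)
    have expand : c₁ * exp (-(c₁ * x)) * (1 - exp (-(c₂ * x)))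
          - (1 - exp (-(c₁ * x))) * (c₂ * exp (-(c₂ * x)))
        = ((c₁ * x) * (exp (c₂ * x) - 1) - (c₂ * x) * (exp (c₁ * x) - 1))
          / (x * exp (c₁ * x) * exp (c₂ * x)) := by
      rw [exp_neg, exp_neg]
      field_simp
    rw [expand]
    apply div_nonneg _ (by positivity)
    have := weibull_aux_slope_exp (mul_pos hc₁ hx0) (by nlinarith : c₁ * x ≤ c₂ * x)
    linarith

/-- The ratio of the sums of `u`-terms is increasing. -/
lemma weibull_aux_lemB {c₁ c₂ : ℝ} (hc₁ : 0 < c₁) (h12 : c₁ ≤ c₂) (h11 : c₁ ≤ 1) :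
    MonotoneOn (fun x : ℝ => (uu (c₁ * x) + uu x) / (uu (c₂ * x) + uu x)) (Ioi 0) := by
  have hc₂ : 0 < c₂ := hc₁.trans_le h12
  have hN : ∀ x : ℝ, 0 < x → HasDerivAt (fun x : ℝ => uu (c₁ * x) + uu x)
      ((exp (c₁*x) - 1 - (c₁*x) * exp (c₁*x)) / (exp (c₁*x) - 1) ^ 2 * (c₁ * 1)
        + (exp x - 1 - x * exp x) / (exp x - 1) ^ 2) x := by
    intro x hx
    exact ((uu_hasDerivAt (mul_pos hc₁ hx)).comp x ((hasDerivAt_id x).const_mul c₁)).add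
      (uu_hasDerivAt hx)
  have hD : ∀ x : ℝ, 0 < x → HasDerivAt (fun x : ℝ => uu (c₂ * x) + uu x)
      ((exp (c₂*x) - 1 - (c₂*x) * exp (c₂*x)) / (exp (c₂*x) - 1) ^ 2 * (c₂ * 1)
        + (exp x - 1 - x * exp x) / (exp x - 1) ^ 2) x := by
    intro x hx
    exact ((uu_hasDerivAt (mul_pos hc₂ hx)).comp x ((hasDerivAt_id x).const_mul c₂)).add
      (uu_hasDerivAt hx)
  have hDpos : ∀ x : ℝ, 0 < x → 0 < uu (c₂ * x) + uu x := by
    intro x hx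
    exact add_pos (uu_pos (mul_pos hc₂ hx)) (uu_pos hx)
  apply monotoneOn_of_deriv_nonneg (convex_Ioi 0)
  · apply ContinuousOn.div
    · intro x hx
      exact (hN x hx).continuousAt.continuousWithinAt
    · intro x hx
      exact (hD x hx).continuousAt.continuousWithinAt
    · intro x hx
      exact (hDpos x hx).ne'
  · rw [interior_Ioi]
    intro x hx
    exact (((hN x hx).div (hD x hx) (hDpos x hx).ne')).differentiableAt.differentiableWithinAt
  · intro x hx
    rw [interior_Ioi] at hx
    have hx0 : (0 : ℝ) < x := hx
    have hq := (hN x hx0).div (hD x hx0) (hDpos x hx0).ne'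
    rw [show deriv (fun x : ℝ => (uu (c₁ * x) + uu x) / (uu (c₂ * x) + uu x)) x = _ from hq.deriv]
    apply div_nonneg _ (by positivity)
    set aP := (exp (c₁*x) - 1 - (c₁*x) * exp (c₁*x)) / (exp (c₁*x) - 1) ^ 2 with haP
    set aQ := (exp (c₂*x) - 1 - (c₂*x) * exp (c₂*x)) / (exp (c₂*x) - 1) ^ 2 with haQ
    set aR := (exp x - 1 - x * exp x) / (exp x - 1) ^ 2 with haR
    have eP : x * (aP * (c₁ * 1)) = uu (c₁*x) * (1 - (c₁*x) - uu (c₁*x)) := by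
      rw [haP]
      have := uu_id (mul_pos hc₁ hx0)
      linear_combination this
    have eQ : x * (aQ * (c₂ * 1)) = uu (c₂*x) * (1 - (c₂*x) - uu (c₂*x)) := by
      rw [haQ]
      have := uu_id (mul_pos hc₂ hx0)
      linear_combination this
    have eR : x * aR = uu x * (1 - x - uu x) := by
      rw [haR]
      exact uu_id hx0
    have hk := weibull_aux_keyB (uu_pos (mul_pos hc₂ hx0)).le (uu_pos hx0).le
      (uu_anti (mul_pos hc₁ hx0) (mul_le_mul_of_nonneg_right h12 hx0.le))
      (uu_phi (mul_pos hc₁ hx0) (mul_le_mul_of_nonneg_right h12 hx0.le))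
      (uu_phi (mul_pos hc₁ hx0) (by nlinarith : c₁ * x ≤ x))
    have main : x * ((aP * (c₁ * 1) + aR) * (uu (c₂*x) + uu x)
          - (uu (c₁*x) + uu x) * (aQ * (c₂ * 1) + aR))
        = (uu (c₁*x) * (1 - (c₁*x) - uu (c₁*x)) + uu x * (1 - x - uu x)) * (uu (c₂*x) + uu x)
          - (uu (c₁*x) + uu x)
            * (uu (c₂*x) * (1 - (c₂*x) - uu (c₂*x)) + uu x * (1 - x - uu x)) := by
      linear_combination (uu (c₂*x) + uu x) * eP
        + ((uu (c₂*x) + uu x) - (uu (c₁*x) + uu x)) * eR - (uu (c₁*x) + uu x) * eQ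
    refine le_of_mul_le_mul_left ?_ hx0
    rw [mul_zero, main]
    exact hk

lemma weibull_aux_monoMul {f g : ℝ → ℝ} {s : Set ℝ} (hf : MonotoneOn f s)
    (hg : MonotoneOn g s) (hf0 : ∀ x ∈ s, 0 ≤ f x) (hg0 : ∀ x ∈ s, 0 ≤ g x) :
    MonotoneOn (fun x => f x * g x) s := fun a ha b hb hab =>
  mul_le_mul (hf ha hb hab) (hg ha hb hab) (hg0 a ha) (hf0 b hb)

lemma weibull_aux_cancel {G₁ G₂ GB w S₁ S₂ : ℝ} (hGB : GB ≠ 0) (hw : w ≠ 0) :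
    (G₁ * GB * (w * S₁)) / (G₂ * GB * (w * S₂)) = (G₁ / G₂) * (S₁ / S₂) := by
  rw [show G₁ * GB * (w * S₁) = (G₁ * S₁) * (GB * w) by ring,
    show G₂ * GB * (w * S₂) = (G₂ * S₂) * (GB * w) by ring,
    mul_div_mul_right _ _ (mul_ne_zero hGB hw), div_mul_div_comm]

/-- For any `α > 0`, if `λ₁* = min(λ, λ₁, λ₁*)` and `(λ₁, λ) ≼^w (λ₁*, λ)`
(i.e. `min(λ₁, λ) ≥ min(λ₁*, λ)` and `λ₁ + λ ≥ λ₁* + λ`), then `X_{2:2} ≤_lr Y_{2:2}`: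
the ratio of densities `f_{2:2}*(t) / f_{2:2}(t)` of the parallel Weibull systems with
scale parameters `(λ₁*, λ)` and `(λ₁, λ)`, where the density for parameters `(a, b)` is
`(1 − e^{−(a t)^α})(1 − e^{−(b t)^α}) · (α/t) · [u(a t) + u(b t)]` with
`u(s) = s^α / (e^{s^α} − 1)`, is increasing in `t` on `(0, ∞)`. -/
theorem parallel_weibull_lr_order_weak_maj
    (α lam lam₁ lam₁s : ℝ) (hα : 0 < α)
    (hlam : 0 < lam) (hlam₁ : 0 < lam₁) (hlam₁s : 0 < lam₁s)
    (hmin : lam₁s = min lam (min lam₁ lam₁s))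
    (hwmaj : min lam₁s lam ≤ min lam₁ lam ∧ lam₁s + lam ≤ lam₁ + lam) :
    MonotoneOn
      (fun t : ℝ =>
        ((1 - exp (-((lam₁s * t) ^ α))) * (1 - exp (-((lam * t) ^ α))) *
            ((α / t) *
              ((lam₁s * t) ^ α / (exp ((lam₁s * t) ^ α) - 1) +
                (lam * t) ^ α / (exp ((lam * t) ^ α) - 1)))) /
          ((1 - exp (-((lam₁ * t) ^ α))) * (1 - exp (-((lam * t) ^ α))) *
            ((α / t) *
              ((lam₁ * t) ^ α / (exp ((lam₁ * t) ^ α) - 1) +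
                (lam * t) ^ α / (exp ((lam * t) ^ α) - 1)))))
      (Ioi (0 : ℝ)) := by
  have hsl : lam₁s ≤ lam := hmin.le.trans (min_le_left _ _)
  have hs1 : lam₁s ≤ lam₁ := hmin.le.trans ((min_le_right _ _).trans (min_le_left _ _))
  set c₁ : ℝ := (lam₁s / lam) ^ α with hc₁def
  set c₂ : ℝ := (lam₁ / lam) ^ α with hc₂def
  have hc₁ : 0 < c₁ := rpow_pos_of_pos (div_pos hlam₁s hlam) α
  have h12 : c₁ ≤ c₂ :=
    rpow_le_rpow (div_nonneg hlam₁s.le hlam.le)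
      (by gcongr : lam₁s / lam ≤ lam₁ / lam) hα.le
  have h11 : c₁ ≤ 1 :=
    rpow_le_one (div_nonneg hlam₁s.le hlam.le) ((div_le_one hlam).2 hsl) hα.le
  have hF : MonotoneOn
      (fun x : ℝ => ((1 - exp (-(c₁ * x))) / (1 - exp (-(c₂ * x))))
        * ((uu (c₁ * x) + uu x) / (uu (c₂ * x) + uu x))) (Ioi 0) := by
    apply weibull_aux_monoMul (weibull_aux_lemA hc₁ h12) (weibull_aux_lemB hc₁ h12 h11)
    · intro x hx
      exact div_nonneg (weibull_aux_one_sub_exp_neg_pos (mul_pos hc₁ hx)).le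
        (weibull_aux_one_sub_exp_neg_pos (mul_pos (hc₁.trans_le h12) hx)).le
    · intro x hx
      exact div_nonneg (add_nonneg (uu_pos (mul_pos hc₁ hx)).le (uu_pos hx).le)
        (add_nonneg (uu_pos (mul_pos (hc₁.trans_le h12) hx)).le (uu_pos hx).le)
  have hrw : ∀ t : ℝ, 0 < t →
      ((1 - exp (-((lam₁s * t) ^ α))) * (1 - exp (-((lam * t) ^ α))) *
            ((α / t) *
              ((lam₁s * t) ^ α / (exp ((lam₁s * t) ^ α) - 1) +
                (lam * t) ^ α / (exp ((lam * t) ^ α) - 1)))) /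
          ((1 - exp (-((lam₁ * t) ^ α))) * (1 - exp (-((lam * t) ^ α))) *
            ((α / t) *
              ((lam₁ * t) ^ α / (exp ((lam₁ * t) ^ α) - 1) +
                (lam * t) ^ α / (exp ((lam * t) ^ α) - 1))))
        = ((1 - exp (-(c₁ * (lam * t) ^ α))) / (1 - exp (-(c₂ * (lam * t) ^ α))))
          * ((uu (c₁ * (lam * t) ^ α) + uu ((lam * t) ^ α))
            / (uu (c₂ * (lam * t) ^ α) + uu ((lam * t) ^ α))) := by
    intro t ht
    have hX : 0 < (lam * t) ^ α := rpow_pos_of_pos (mul_pos hlam ht) α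
    have e1 : (lam₁s * t) ^ α = c₁ * (lam * t) ^ α := by
      rw [hc₁def, ← Real.mul_rpow (div_nonneg hlam₁s.le hlam.le) (mul_pos hlam ht).le]
      congr 1
      field_simp
    have e2 : (lam₁ * t) ^ α = c₂ * (lam * t) ^ α := by
      rw [hc₂def, ← Real.mul_rpow (div_nonneg hlam₁.le hlam.le) (mul_pos hlam ht).le]
      congr 1
      field_simp
    rw [e1, e2]
    rw [show ∀ a b : ℝ, a / (exp a - 1) + b / (exp b - 1) = uu a + uu b from
      fun a b => by rw [uu, uu]]
    exact weibull_aux_cancel (weibull_aux_one_sub_exp_neg_pos hX).ne'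
      (div_ne_zero hα.ne' ht.ne')
  intro t₁ ht₁ t₂ ht₂ htt
  have hX₁ : (lam * t₁) ^ α ∈ Ioi (0:ℝ) := rpow_pos_of_pos (mul_pos hlam ht₁) α
  have hX₂ : (lam * t₂) ^ α ∈ Ioi (0:ℝ) := rpow_pos_of_pos (mul_pos hlam ht₂) α
  have hXle : (lam * t₁) ^ α ≤ (lam * t₂) ^ α :=
    rpow_le_rpow (mul_pos hlam ht₁).le (mul_le_mul_of_nonneg_left htt hlam.le) hα.le
  simp only
  rw [hrw t₁ ht₁, hrw t₂ ht₂]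
  exact hF hX₁ hX₂ hXle
end
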